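/- arXiv:1706.09680 — 2 statements merged into one kernel-verified Lean document; each statement's English description precedes it below -/
import Mathlib

section
/- Let q > p ≥ 2 be integers and set f(n) = s_φ(pn) + s_φ(qn). Then f is quasi-additive with respect to the Zeckendorf expansion: there exists r ≥ 0 such that f(n1+n2) = f(n1) + f(n2) for all positive integers n1, n2 that are r-separated at some position k, and f(n) = f(S(n)) for all positive integers n with v(n,r) = 0. -/
open Classical in
/-- The Zeckendorf digits of `n`: `zeckDigit n i` is the coefficient of the
Fibonacci number `F_i` in the (unique) Zeckendorf representation of `n`. -/
noncomputable def zeckDigit (n : ℕ) : ℕ → ℕ :=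
  if h : ∃ e : ℕ → ℕ, (∀ i, e i ≤ 1) ∧ (∀ i, i < 2 → e i = 0) ∧
      (∀ i, e i = 1 → e (i + 1) = 0) ∧ (∀ i, n + 2 ≤ i → e i = 0) ∧
      n = ∑ i ∈ Finset.range (n + 2), e i * Nat.fib i
  then Classical.choose h else fun _ => 0

/-- The Zeckendorf sum-of-digits function `s_φ`. -/
noncomputable def sphi (n : ℕ) : ℕ := ∑ i ∈ Finset.range (n + 2), zeckDigit n i

/-- `v(n,k) = Σ_{2 ≤ i < k} ε_i(n) F_i` (digits below index 2 vanish). -/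
noncomputable def zv (n k : ℕ) : ℕ := ∑ i ∈ Finset.range k, zeckDigit n i * Nat.fib i

/-- The Zeckendorf shift operator `S(n) = Σ_{k ≥ 2} F_{k+1} ε_k(n)`. -/
noncomputable def zshift (n : ℕ) : ℕ :=
  ∑ i ∈ Finset.range (n + 2), Nat.fib (i + 1) * zeckDigit n i

/-- `n1` and `n2` are `r`-separated at position `k`. -/
def RSep (r k n1 n2 : ℕ) : Prop :=
  (∀ i, k - r ≤ i → zeckDigit n1 i = 0) ∧ (∀ i, i ≤ k + r → zeckDigit n2 i = 0)

/-- `g` is `r`-quasi-additive with respect to the Zeckendorf expansion. -/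
def QuasiAdd (r : ℕ) (g : ℕ → ℕ) : Prop :=
  (∀ n1 n2 k, RSep r k n1 n2 → g (n1 + n2) = g n1 + g n2) ∧
  (∀ n, zv n r = 0 → g n = g (zshift n))

namespace ZeckAux

/-- Admissible digit sequences. -/
def ZAdm (e : ℕ → ℕ) : Prop :=
  (∀ i, e i ≤ 1) ∧ (∀ i, i < 2 → e i = 0) ∧ (∀ i, e i = 1 → e (i + 1) = 0)

lemma self_le_fib_add_one : ∀ i : ℕ, i ≤ Nat.fib i + 1
  | 0 => by decide
  | 1 => by decide
  | 2 => by decide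
  | (i+3) => by
      have h1 := self_le_fib_add_one (i+2)
      have h2 : 1 ≤ Nat.fib (i+1) := Nat.fib_pos.mpr (by omega)
      have h3 : Nat.fib (i+3) = Nat.fib (i+1) + Nat.fib (i+2) := Nat.fib_add_two
      omega

/-- Partial sums of admissible sequences are `< fib K` for `K ≥ 2`. -/
lemma zadm_sum_lt (e : ℕ → ℕ) (he : ZAdm e) :
    ∀ K, 2 ≤ K → ∑ i ∈ Finset.range K, e i * Nat.fib i < Nat.fib K := by
  obtain ⟨h1, h2, h3⟩ := he
  intro K
  induction K using Nat.strong_induction_on with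
  | _ K ih =>
    match K with
    | 0 => omega
    | 1 => omega
    | 2 => intro _
           have : ∑ i ∈ Finset.range 2, e i * Nat.fib i = 0 := by
             rw [Finset.sum_range_succ, Finset.sum_range_one, h2 0 (by omega), h2 1 (by omega)]
             simp
           simp [this]
    | 3 => intro _
           have e2 := h1 2
           rw [Finset.sum_range_succ]
           have : ∑ i ∈ Finset.range 2, e i * Nat.fib i = 0 := by
             rw [Finset.sum_range_succ, Finset.sum_range_one, h2 0 (by omega), h2 1 (by omega)]
             simp
           rw [this]
           simp [Nat.fib]
           omega
    | (K+4) => intro _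
               rw [Finset.sum_range_succ]
               rcases Nat.le_one_iff_eq_zero_or_eq_one.mp (h1 (K+3)) with h | h
               · have := ih (K+3) (by omega) (by omega)
                 have hle : Nat.fib (K+3) ≤ Nat.fib (K+4) := Nat.fib_le_fib_succ
                 rw [h]
                 omega
               · have hK2 : e (K+2) = 0 := by
                   rcases Nat.le_one_iff_eq_zero_or_eq_one.mp (h1 (K+2)) with h' | h'
                   · exact h'
                   · have h4 : e (K+3) = 0 := h3 (K+2) h'; omega
                 have hstep : ∑ i ∈ Finset.range (K+3), e i * Nat.fib i
                     = ∑ i ∈ Finset.range (K+2), e i * Nat.fib i := by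
                   rw [Finset.sum_range_succ, hK2]; simp
                 have := ih (K+2) (by omega) (by omega)
                 have hfib : Nat.fib (K+4) = Nat.fib (K+2) + Nat.fib (K+3) := Nat.fib_add_two
                 rw [hstep, h]
                 omega

/-- Existence of Zeckendorf representations. -/
lemma zeck_exists : ∀ n : ℕ, ∃ e : ℕ → ℕ, ZAdm e ∧ (∀ i, e i = 1 → Nat.fib i ≤ n) ∧
    ∀ N, (∀ i, e i = 1 → i < N) → n = ∑ i ∈ Finset.range N, e i * Nat.fib i := by
  intro n
  induction n using Nat.strong_induction_on with
  | _ n ih =>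
    rcases Nat.eq_zero_or_pos n with rfl | hn
    · exact ⟨fun _ => 0, ⟨fun _ => by simp, fun _ _ => rfl, fun _ h => by simp at h⟩,
        fun i h => by simp at h, fun N _ => by simp⟩
    · set k := Nat.findGreatest (fun k => Nat.fib k ≤ n) (n+1) with hk
      have hk2 : 2 ≤ k := Nat.le_findGreatest (by omega) (by simpa using Nat.succ_le_of_lt hn)
      have hfk : Nat.fib k ≤ n :=
        Nat.findGreatest_spec (P := fun k => Nat.fib k ≤ n) (m := 2) (by omega) (by simpa using Nat.succ_le_of_lt hn)
      have hkub : n < Nat.fib (k+1) := by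
        by_contra hcon
        push_neg at hcon
        have hkn : k + 1 ≤ n + 1 := by
          have := self_le_fib_add_one (k+1)
          omega
        have : k + 1 ≤ k := Nat.le_findGreatest hkn hcon
        omega
      obtain ⟨j, hj⟩ : ∃ j, k = j + 2 := ⟨k - 2, by omega⟩
      have hfib1 : Nat.fib (k+1) = Nat.fib (j+1) + Nat.fib k := by
        rw [hj]; exact Nat.fib_add_two
      set m := n - Nat.fib k with hm
      have hmlt : m < Nat.fib (j+1) := by omega
      have hfkpos : 0 < Nat.fib k := Nat.fib_pos.mpr (by omega)
      have hmn : m < n := by omega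
      obtain ⟨e', ⟨he1, he2, he3⟩, hfb, hsum⟩ := ih m hmn
      have hsupp' : ∀ i, e' i = 1 → i < j + 1 := by
        intro i hi
        by_contra hcon
        push_neg at hcon
        have hmono : Nat.fib (j+1) ≤ Nat.fib i := Nat.fib_mono hcon
        have := hfb i hi
        omega
      have he'z : ∀ i, j + 1 ≤ i → e' i = 0 := by
        intro i hi
        rcases Nat.le_one_iff_eq_zero_or_eq_one.mp (he1 i) with h | h
        · exact h
        · have := hsupp' i h; omega
      refine ⟨fun i => if i = k then 1 else e' i, ⟨?_, ?_, ?_⟩, ?_, ?_⟩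
      · intro i; by_cases hik : i = k <;> simp [hik, he1 i]
      · intro i hi
        have : i ≠ k := by omega
        simp [this, he2 i hi]
      · intro i hi
        by_cases hik : i = k
        · have : i + 1 ≠ k := by omega
          simp only [hik] at hi ⊢
          have : k + 1 ≠ k := by omega
          simp [this, he'z (k+1) (by omega)]
        · simp only [if_neg hik] at hi
          have : i + 1 ≠ k := by have := hsupp' i hi; omega
          simp [this, he3 i hi]
      · intro i hi
        by_cases hik : i = k
        · subst hik; exact hfk
        · simp only [if_neg hik] at hi
          exact (hfb i hi).trans (by omega)
      · intro N hsN
        have hkN : k < N := hsN k (by simp)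
        have he'k : e' k = 0 := he'z k (by omega)
        have key : ∀ i, (if i = k then 1 else e' i) * Nat.fib i
            = e' i * Nat.fib i + (if i = k then Nat.fib k else 0) := by
          intro i
          by_cases hik : i = k
          · subst hik; simp [he'k]
          · simp [hik]
        have hsum' : m = ∑ i ∈ Finset.range N, e' i * Nat.fib i := by
          apply hsum
          intro i hi
          have := hsupp' i hi
          omega
        calc n = Nat.fib k + m := by omega
        _ = ∑ i ∈ Finset.range N, (if i = k then 1 else e' i) * Nat.fib i := by
            simp only [key, Finset.sum_add_distrib, ← hsum']
            rw [Finset.sum_ite_eq' (Finset.range N) k (fun _ => Nat.fib k)]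
            simp [hkN]
            omega

lemma zeck_unique_top (e e' : ℕ → ℕ) (he : ZAdm e) (he' : ZAdm e') (N : ℕ)
    (hN : e N = 1) (hN' : e' N = 0)
    (hsum : ∑ i ∈ Finset.range (N+1), e i * Nat.fib i
      = ∑ i ∈ Finset.range (N+1), e' i * Nat.fib i) : False := by
  have hN2 : 2 ≤ N := by
    by_contra hc
    have := he.2.1 N (by omega)
    omega
  have hlt := zadm_sum_lt e' he' N hN2
  have h1 : ∑ i ∈ Finset.range (N+1), e i * Nat.fib i ≥ Nat.fib N := by
    rw [Finset.sum_range_succ, hN]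
    omega
  have h2 : ∑ i ∈ Finset.range (N+1), e' i * Nat.fib i
      = ∑ i ∈ Finset.range N, e' i * Nat.fib i := by
    rw [Finset.sum_range_succ, hN']
    simp
  omega

lemma zeck_unique_aux : ∀ N (e e' : ℕ → ℕ), ZAdm e → ZAdm e' →
    (∑ i ∈ Finset.range N, e i * Nat.fib i = ∑ i ∈ Finset.range N, e' i * Nat.fib i) →
    ∀ i, i < N → e i = e' i := by
  intro N
  induction N with
  | zero => intro _ _ _ _ _ i hi; omega
  | succ N ihN =>
    intro e e' he he' hsum i hi
    have htop : e N = e' N := by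
      rcases Nat.le_one_iff_eq_zero_or_eq_one.mp (he.1 N) with h | h <;>
        rcases Nat.le_one_iff_eq_zero_or_eq_one.mp (he'.1 N) with h' | h'
      · omega
      · exact absurd (zeck_unique_top e' e he' he N h' h hsum.symm) (by simp)
      · exact absurd (zeck_unique_top e e' he he' N h h' hsum) (by simp)
      · omega
    rcases Nat.lt_succ_iff_lt_or_eq.mp hi with hi' | hi'
    · have hsum' : ∑ i ∈ Finset.range N, e i * Nat.fib i
          = ∑ i ∈ Finset.range N, e' i * Nat.fib i := by
        rw [Finset.sum_range_succ, Finset.sum_range_succ, htop] at hsum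
        omega
      exact ihN e e' he he' hsum' i hi'
    · rw [hi']; exact htop

lemma zeckDigit_spec (n : ℕ) : ZAdm (zeckDigit n) ∧ (∀ i, n + 2 ≤ i → zeckDigit n i = 0) ∧
    n = ∑ i ∈ Finset.range (n + 2), zeckDigit n i * Nat.fib i := by
  have hex : ∃ e : ℕ → ℕ, (∀ i, e i ≤ 1) ∧ (∀ i, i < 2 → e i = 0) ∧
      (∀ i, e i = 1 → e (i + 1) = 0) ∧ (∀ i, n + 2 ≤ i → e i = 0) ∧
      n = ∑ i ∈ Finset.range (n + 2), e i * Nat.fib i := by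
    obtain ⟨e, ⟨h1, h2, h3⟩, hfb, hsum⟩ := zeck_exists n
    refine ⟨e, h1, h2, h3, ?_, hsum (n+2) ?_⟩
    · intro i hi
      rcases Nat.le_one_iff_eq_zero_or_eq_one.mp (h1 i) with h | h
      · exact h
      · have := hfb i h; have := self_le_fib_add_one i; omega
    · intro i hi; have := hfb i hi; have := self_le_fib_add_one i; omega
  have hspec := Classical.choose_spec hex
  have hd : zeckDigit n = Classical.choose hex := by
    rw [zeckDigit, dif_pos hex]
  rw [hd]
  exact ⟨⟨hspec.1, hspec.2.1, hspec.2.2.1⟩, hspec.2.2.2.1, hspec.2.2.2.2⟩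

lemma zd_adm (n : ℕ) : ZAdm (zeckDigit n) := (zeckDigit_spec n).1
lemma zd_le_one (n i : ℕ) : zeckDigit n i ≤ 1 := (zd_adm n).1 i
lemma zd_low (n : ℕ) : ∀ i, i < 2 → zeckDigit n i = 0 := (zd_adm n).2.1
lemma zd_adj (n : ℕ) : ∀ i, zeckDigit n i = 1 → zeckDigit n (i+1) = 0 := (zd_adm n).2.2
lemma zd_high (n : ℕ) : ∀ i, n + 2 ≤ i → zeckDigit n i = 0 := (zeckDigit_spec n).2.1
lemma zd_sum (n : ℕ) : n = ∑ i ∈ Finset.range (n + 2), zeckDigit n i * Nat.fib i :=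
  (zeckDigit_spec n).2.2

lemma zd_sum' (n N : ℕ) (hN : n + 2 ≤ N) :
    n = ∑ i ∈ Finset.range N, zeckDigit n i * Nat.fib i := by
  rw [← Finset.sum_subset (Finset.range_subset_range.mpr hN)
    (fun x hx hx' => by
      simp only [Finset.mem_range, not_lt] at hx'
      rw [zd_high n x (by omega)]; simp)]
  exact zd_sum n

lemma sphi_eq (n N : ℕ) (hN : n + 2 ≤ N) :
    sphi n = ∑ i ∈ Finset.range N, zeckDigit n i := by
  rw [sphi]
  exact Finset.sum_subset (Finset.range_subset_range.mpr hN)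
    (fun x hx hx' => by
      simp only [Finset.mem_range, not_lt] at hx'
      exact zd_high n x (by omega))

lemma zshift_eq (n N : ℕ) (hN : n + 2 ≤ N) :
    zshift n = ∑ i ∈ Finset.range N, Nat.fib (i+1) * zeckDigit n i := by
  rw [zshift]
  exact Finset.sum_subset (Finset.range_subset_range.mpr hN)
    (fun x hx hx' => by
      simp only [Finset.mem_range, not_lt] at hx'
      rw [zd_high n x (by omega)]; simp)

/-- Characterization: any admissible representation gives the Zeckendorf digits. -/
lemma zeckDigit_eq (n N : ℕ) (e : ℕ → ℕ) (he : ZAdm e) (hsupp : ∀ i, e i = 1 → i < N)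
    (hsum : n = ∑ i ∈ Finset.range N, e i * Nat.fib i) : ∀ i, zeckDigit n i = e i := by
  set M := max N (n + 2) with hM
  have hez : ∀ i, N ≤ i → e i = 0 := by
    intro i hi
    rcases Nat.le_one_iff_eq_zero_or_eq_one.mp (he.1 i) with h | h
    · exact h
    · have := hsupp i h; omega
  have hsum1 : n = ∑ i ∈ Finset.range M, e i * Nat.fib i := by
    rw [← Finset.sum_subset (Finset.range_subset_range.mpr (le_max_left N (n+2)))
      (fun x hx hx' => by
        simp only [Finset.mem_range, not_lt] at hx'
        rw [hez x (by omega)]; simp)]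
    exact hsum
  have hsum2 : n = ∑ i ∈ Finset.range M, zeckDigit n i * Nat.fib i :=
    zd_sum' n M (le_max_right N (n+2))
  have hagree := zeck_unique_aux M (zeckDigit n) e (zd_adm n) he (by omega)
  intro i
  by_cases hi : i < M
  · exact hagree i hi
  · push_neg at hi
    rw [zd_high n i (by omega), hez i (by omega)]

lemma fib_le_of_zd (n i : ℕ) (h : zeckDigit n i ≠ 0) : Nat.fib i ≤ n := by
  have hi : i < n + 2 := by
    by_contra hc
    exact h (zd_high n i (by omega))
  have hsum := zd_sum n
  have hle : zeckDigit n i * Nat.fib i ≤ ∑ j ∈ Finset.range (n+2), zeckDigit n j * Nat.fib j :=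
    Finset.single_le_sum (f := fun j => zeckDigit n j * Nat.fib j)
      (fun j _ => Nat.zero_le _) (Finset.mem_range.mpr hi)
  have h1 : zeckDigit n i = 1 := by have := zd_le_one n i; omega
  rw [h1, one_mul] at hle
  omega

lemma zd_zero_of_ge (n t : ℕ) (h : n < Nat.fib t) : ∀ i, t ≤ i → zeckDigit n i = 0 := by
  intro i hi
  by_contra hc
  have h1 := fib_le_of_zd n i hc
  have h2 : Nat.fib t ≤ Nat.fib i := Nat.fib_mono hi
  omega

lemma lt_fib_of_zd (n K : ℕ) (h2 : 2 ≤ K) (h : ∀ i, K ≤ i → zeckDigit n i = 0) :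
    n < Nat.fib K := by
  have hsum : n = ∑ i ∈ Finset.range K, zeckDigit n i * Nat.fib i := by
    rw [Finset.sum_subset (f := fun i => zeckDigit n i * Nat.fib i)
      (Finset.range_subset_range.mpr (le_max_left K (n+2)))
      (fun x hx hx' => by
        simp only [Finset.mem_range, not_lt] at hx'
        show zeckDigit n x * Nat.fib x = 0
        rw [h x (by omega)]; simp)]
    exact zd_sum' n _ (le_max_right K (n+2))
  rw [hsum]
  exact zadm_sum_lt _ (zd_adm n) K h2

noncomputable def minIdx (n : ℕ) : ℕ := sInf {i | zeckDigit n i ≠ 0}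

lemma minIdx_mem (n : ℕ) (hn : 0 < n) : zeckDigit n (minIdx n) ≠ 0 := by
  have hne : {i | zeckDigit n i ≠ 0}.Nonempty := by
    by_contra hc
    rw [Set.not_nonempty_iff_eq_empty] at hc
    have hz : ∀ i, zeckDigit n i = 0 := by
      intro i
      by_contra hcc
      have : i ∈ {i | zeckDigit n i ≠ 0} := hcc
      rw [hc] at this
      exact this
    have := zd_sum n
    simp [hz] at this
    omega
  exact Nat.sInf_mem hne

lemma minIdx_le (n i : ℕ) (h : zeckDigit n i ≠ 0) : minIdx n ≤ i := Nat.sInf_le h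

lemma zd_zero_of_lt_minIdx (n i : ℕ) (h : i < minIdx n) : zeckDigit n i = 0 := by
  by_contra hc
  have := minIdx_le n i hc
  omega

lemma minIdx_two_le (n : ℕ) (hn : 0 < n) : 2 ≤ minIdx n := by
  by_contra hc
  exact minIdx_mem n hn (zd_low n _ (by omega))

lemma minIdx_le_succ (n : ℕ) (hn : 0 < n) : minIdx n ≤ n + 1 := by
  have h1 := fib_le_of_zd n _ (minIdx_mem n hn)
  have h2 := self_le_fib_add_one (minIdx n)
  omega

/-- Sum-of-digits is additive for well-separated numbers. -/
lemma sphi_add_sep (x y t : ℕ) (hx : 0 < x) (hy : 0 < y)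
    (hxd : ∀ i, t ≤ i → zeckDigit x i = 0) (hyd : ∀ i, i ≤ t + 1 → zeckDigit y i = 0) :
    sphi (x + y) = sphi x + sphi y := by
  set N := x + y + 2 with hN
  set e : ℕ → ℕ := fun i => zeckDigit x i + zeckDigit y i with he
  have hxt : ∀ i, zeckDigit x i = 1 → i < t := by
    intro i hi
    by_contra hc
    rw [hxd i (by omega)] at hi
    omega
  have hyt : ∀ i, zeckDigit y i = 1 → t + 2 ≤ i := by
    intro i hi
    by_contra hc
    rw [hyd i (by omega)] at hi
    omega
  have hone : ∀ i, e i = 1 → (zeckDigit x i = 1 ∧ zeckDigit y i = 0) ∨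
      (zeckDigit x i = 0 ∧ zeckDigit y i = 1) := by
    intro i hi
    have := zd_le_one x i
    have := zd_le_one y i
    simp only [he] at hi
    omega
  have hadm : ZAdm e := by
    refine ⟨?_, ?_, ?_⟩
    · intro i
      have hx1 := zd_le_one x i
      have hy1 := zd_le_one y i
      rcases Nat.eq_zero_or_pos (zeckDigit x i) with h | h
      · simp [he, h]; omega
      · have hx2 : zeckDigit x i = 1 := by omega
        have : i < t := hxt i hx2
        have : zeckDigit y i = 0 := hyd i (by omega)
        simp [he, hx2, this]
    · intro i hi
      simp [he, zd_low x i hi, zd_low y i hi]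
    · intro i hi
      rcases hone i hi with ⟨h1, h2⟩ | ⟨h1, h2⟩
      · have hit := hxt i h1
        simp [he, zd_adj x i h1, hyd (i+1) (by omega)]
      · have hit := hyt i h2
        simp [he, zd_adj y i h2, hxd (i+1) (by omega)]
  have hsupp : ∀ i, e i = 1 → i < N := by
    intro i hi
    rcases hone i hi with ⟨h1, _⟩ | ⟨_, h1⟩
    · have := fib_le_of_zd x i (by omega)
      have := self_le_fib_add_one i
      omega
    · have := fib_le_of_zd y i (by omega)
      have := self_le_fib_add_one i
      omega
  have hsum : x + y = ∑ i ∈ Finset.range N, e i * Nat.fib i := by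
    have h1 := zd_sum' x N (by omega)
    have h2 := zd_sum' y N (by omega)
    simp only [he, add_mul, Finset.sum_add_distrib]
    omega
  have hdig := zeckDigit_eq (x+y) N e hadm hsupp hsum
  have h1 : sphi (x+y) = ∑ i ∈ Finset.range N, e i := by
    rw [sphi_eq (x+y) N (by omega)]
    exact Finset.sum_congr rfl (fun i _ => hdig i)
  rw [h1, sphi_eq x N (by omega), sphi_eq y N (by omega)]
  simp only [he, Finset.sum_add_distrib]

/-- The digits of `zshift n` are the shifted digits of `n`. -/
lemma zd_zshift (n : ℕ) :
    zeckDigit (zshift n) 0 = 0 ∧ ∀ i, zeckDigit (zshift n) (i+1) = zeckDigit n i := by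
  set e : ℕ → ℕ := fun j => match j with
    | 0 => 0
    | j+1 => zeckDigit n j with he
  have hadm : ZAdm e := by
    refine ⟨?_, ?_, ?_⟩
    · intro i
      match i with
      | 0 => simp [he]
      | i+1 => exact zd_le_one n i
    · intro i hi
      match i with
      | 0 => rfl
      | 1 => exact zd_low n 0 (by omega)
    · intro i hi
      match i with
      | 0 => simp [he] at hi
      | i+1 => exact zd_adj n i hi
  have hsupp : ∀ j, e j = 1 → j < n + 3 := by
    intro j hj
    match j with
    | 0 => simp [he] at hj
    | j+1 =>
      have hj' : zeckDigit n j = 1 := hj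
      have : j < n + 2 := by
        by_contra hc
        rw [zd_high n j (by omega)] at hj'
        omega
      omega
  have hsum : zshift n = ∑ j ∈ Finset.range (n+3), e j * Nat.fib j := by
    rw [show n + 3 = (n+2) + 1 from rfl, Finset.sum_range_succ']
    simp only [he]
    rw [zshift]
    simp [mul_comm]
  have hdig := zeckDigit_eq (zshift n) (n+3) e hadm hsupp hsum
  exact ⟨hdig 0, fun i => hdig (i+1)⟩

lemma sphi_zshift (n : ℕ) : sphi (zshift n) = sphi n := by
  obtain ⟨h0, hs⟩ := zd_zshift n
  set M := zshift n + n + 3 with hM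
  have h1 : sphi (zshift n) = ∑ j ∈ Finset.range (M+1), zeckDigit (zshift n) j :=
    sphi_eq _ _ (by omega)
  rw [h1, Finset.sum_range_succ', h0, add_zero]
  rw [sphi_eq n M (by omega)]
  exact Finset.sum_congr rfl (fun i _ => hs i)

/-! ### Analytic estimates via the golden ratio -/

section Analytic

open Real goldenRatio

local notation "Φ" => goldenRatio
local notation "Ψ" => goldenConj
local notation "Β" => (goldenRatio⁻¹ : ℝ)

lemma hBpos : (0:ℝ) < Β := inv_pos.mpr goldenRatio_pos
lemma hgoldB : Φ * Β = 1 := mul_inv_cancel₀ goldenRatio_ne_zero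
lemma hB1 : Β < 1 := by
  rw [inv_lt_one_iff₀]
  right; exact one_lt_goldenRatio
lemma habsPsi : |Ψ| = Β := by
  rw [abs_of_neg goldenConj_neg, ← inv_goldenRatio]
lemma hgold_eq : Φ = 1 + Β := by
  have h2 : Φ * (1 + Β) = Φ * Φ := by
    rw [mul_add, mul_one, hgoldB, ← pow_two, goldenRatio_sq, add_comm]
  exact (mul_left_cancel₀ goldenRatio_ne_zero h2).symm
lemma hBsq : Β ^ 2 = 1 - Β := by
  have h := hgold_eq
  have h2 := hgoldB
  nlinarith
lemma hB34 : Β < 3/4 := by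
  have h43 : (4:ℝ)/3 < Φ := by nlinarith [goldenRatio_sq, one_lt_goldenRatio, goldenRatio_pos]
  have h2 := hgoldB
  nlinarith [goldenRatio_pos, hBpos]

lemma pow_key (s t : ℕ) : Φ ^ s * Β ^ (s + t) = Β ^ t := by
  rw [pow_add, ← mul_assoc, ← mul_pow, hgoldB, one_pow, one_mul]

lemma pow_key1 (t : ℕ) : Φ * Β ^ (t + 1) = Β ^ t := by
  have := pow_key 1 t
  rw [pow_one, Nat.add_comm] at this
  exact this

lemma tail_bound (e : ℕ → ℕ) (he1 : ∀ i, e i ≤ 1) (he2 : ∀ i, e i = 1 → e (i+1) = 0) :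
    ∀ K m N : ℕ, N ≤ m + K →
      |∑ i ∈ Finset.Ico m N, (e i : ℝ) * Ψ ^ i| ≤ Φ * Β ^ m := by
  intro K
  induction K using Nat.strong_induction_on with
  | _ K ih =>
    intro m N hN
    have hpos : (0:ℝ) < Φ * Β ^ m := by positivity
    by_cases hmN : N ≤ m
    · rw [Finset.Ico_eq_empty (by omega)]
      simp only [Finset.sum_empty, abs_zero]
      positivity
    · push_neg at hmN
      have hsplit : ∑ i ∈ Finset.Ico m N, (e i : ℝ) * Ψ ^ i
          = (e m : ℝ) * Ψ ^ m + ∑ i ∈ Finset.Ico (m+1) N, (e i : ℝ) * Ψ ^ i :=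
        Finset.sum_eq_sum_Ico_succ_bot hmN _
      rcases Nat.le_one_iff_eq_zero_or_eq_one.mp (he1 m) with h | h
      · rw [hsplit, h]
        simp only [Nat.cast_zero, zero_mul, zero_add]
        have hih := ih (K-1) (by omega) (m+1) N (by omega)
        calc |∑ i ∈ Finset.Ico (m+1) N, (e i : ℝ) * Ψ ^ i| ≤ Φ * Β ^ (m+1) := hih
        _ = Β ^ m := pow_key1 m
        _ ≤ Φ * Β ^ m := by nlinarith [one_lt_goldenRatio, pow_pos hBpos m]
      · have hdrop : ∑ i ∈ Finset.Ico (m+1) N, (e i : ℝ) * Ψ ^ i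
            = ∑ i ∈ Finset.Ico (m+2) N, (e i : ℝ) * Ψ ^ i := by
          by_cases h2 : m + 1 < N
          · rw [Finset.sum_eq_sum_Ico_succ_bot h2, he2 m h]
            simp
          · rw [Finset.Ico_eq_empty (by omega), Finset.Ico_eq_empty (by omega)]
        have hih := ih (K-2) (by omega) (m+2) N (by omega)
        rw [hsplit, h, hdrop]
        have hend : Β ^ m + Φ * Β ^ (m+2) = Φ * Β ^ m := by
          have h1 : Φ * Β ^ (m+2) = Β ^ (m+1) := pow_key1 (m+1)
          have h2 : Β ^ (m+1) = Β ^ m * Β := pow_succ Β m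
          have h3 := hgold_eq
          rw [h1, h2]
          linear_combination (-(Β^m)) * h3
        calc |((1:ℕ) : ℝ) * Ψ ^ m + ∑ i ∈ Finset.Ico (m+2) N, (e i : ℝ) * Ψ ^ i|
            ≤ |((1:ℕ):ℝ) * Ψ ^ m| + |∑ i ∈ Finset.Ico (m+2) N, (e i : ℝ) * Ψ ^ i| := abs_add_le _ _
        _ ≤ Β ^ m + Φ * Β ^ (m+2) := by
            rw [Nat.cast_one, one_mul, abs_pow, habsPsi]
            exact add_le_add le_rfl hih
        _ = Φ * Β ^ m := hend

lemma tail_lower (e : ℕ → ℕ) (he1 : ∀ i, e i ≤ 1) (he2 : ∀ i, e i = 1 → e (i+1) = 0)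
    (m N : ℕ) (hm : e m = 1) (hN : m < N) :
    Β ^ (m+2) ≤ |∑ i ∈ Finset.Ico m N, (e i : ℝ) * Ψ ^ i| := by
  have hsplit : ∑ i ∈ Finset.Ico m N, (e i : ℝ) * Ψ ^ i
      = (e m : ℝ) * Ψ ^ m + ∑ i ∈ Finset.Ico (m+1) N, (e i : ℝ) * Ψ ^ i :=
    Finset.sum_eq_sum_Ico_succ_bot hN _
  have hdrop : ∑ i ∈ Finset.Ico (m+1) N, (e i : ℝ) * Ψ ^ i
      = ∑ i ∈ Finset.Ico (m+2) N, (e i : ℝ) * Ψ ^ i := by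
    by_cases h2 : m + 1 < N
    · rw [Finset.sum_eq_sum_Ico_succ_bot h2, he2 m hm]
      simp
    · rw [Finset.Ico_eq_empty (by omega), Finset.Ico_eq_empty (by omega)]
  have htail : |∑ i ∈ Finset.Ico (m+2) N, (e i : ℝ) * Ψ ^ i| ≤ Β ^ (m+1) := by
    have := tail_bound e he1 he2 N (m+2) N (by omega)
    calc |∑ i ∈ Finset.Ico (m+2) N, (e i : ℝ) * Ψ ^ i| ≤ Φ * Β ^ (m+2) := this
    _ = Β ^ (m+1) := pow_key1 (m+1)
  rw [hsplit, hm, hdrop, Nat.cast_one, one_mul]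
  have h1 : |Ψ ^ m| - |∑ i ∈ Finset.Ico (m+2) N, (e i : ℝ) * Ψ ^ i|
      ≤ |Ψ ^ m + ∑ i ∈ Finset.Ico (m+2) N, (e i : ℝ) * Ψ ^ i| := by
    have := abs_add_le (Ψ ^ m + ∑ i ∈ Finset.Ico (m+2) N, (e i : ℝ) * Ψ ^ i)
      (-(∑ i ∈ Finset.Ico (m+2) N, (e i : ℝ) * Ψ ^ i))
    simp only [add_neg_cancel_right, abs_neg] at this
    linarith
  have h2 : Β ^ (m+2) ≤ Β ^ m - Β ^ (m+1) := by
    have hb2 := hBsq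
    have hp : (0:ℝ) ≤ Β ^ m := le_of_lt (pow_pos hBpos m)
    have e1 : Β ^ (m+1) = Β ^ m * Β := pow_succ Β m
    have e2 : Β ^ (m+2) = Β ^ m * Β ^ 2 := by rw [← pow_add]
    rw [e1, e2, hb2]
    ring_nf
    nlinarith [hp]
  rw [abs_pow, habsPsi] at h1
  linarith

end Analytic

section Analytic2

open Real goldenRatio

local notation "Φ" => goldenRatio
local notation "Ψ" => goldenConj
local notation "Β" => (goldenRatio⁻¹ : ℝ)

/-- The "conjugate defect" `δ(x) = Σ ε_i(x) ψ^i`. -/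
noncomputable def dsum (x : ℕ) : ℝ :=
  ∑ i ∈ Finset.range (x+2), (zeckDigit x i : ℝ) * Ψ ^ i

lemma gold_mul_eq (x : ℕ) : Φ * (x : ℝ) = (zshift x : ℝ) - dsum x := by
  have hxr : (x:ℝ) = ∑ i ∈ Finset.range (x+2), (zeckDigit x i : ℝ) * (Nat.fib i : ℝ) := by
    exact_mod_cast congrArg (Nat.cast : ℕ → ℝ) (zd_sum x)
  have hzr : (zshift x : ℝ)
      = ∑ i ∈ Finset.range (x+2), (Nat.fib (i+1) : ℝ) * (zeckDigit x i : ℝ) := by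
    rw [zshift]
    push_cast
    rfl
  rw [hxr, hzr, dsum, Finset.mul_sum, ← Finset.sum_sub_distrib]
  apply Finset.sum_congr rfl
  intro i _
  have h := fib_succ_sub_goldenRatio_mul_fib i
  linear_combination (-(zeckDigit x i : ℝ)) * h

lemma dsum_eq_tail (x : ℕ) :
    dsum x = ∑ i ∈ Finset.Ico (minIdx x) (x+2), (zeckDigit x i : ℝ) * Ψ ^ i := by
  rw [dsum, Finset.range_eq_Ico]
  symm
  apply Finset.sum_subset
  · exact Finset.Ico_subset_Ico (Nat.zero_le _) le_rfl
  · intro i hi hni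
    simp only [Finset.mem_Ico] at hi hni
    have : i < minIdx x := by omega
    rw [zd_zero_of_lt_minIdx x i this]
    simp

lemma dsum_le (x : ℕ) : |dsum x| ≤ Φ * Β ^ (minIdx x) := by
  rw [dsum_eq_tail x]
  exact tail_bound _ (zd_le_one x) (zd_adj x) (x+2) (minIdx x) (x+2) (by omega)

lemma dsum_ge (x : ℕ) (hx : 0 < x) : Β ^ (minIdx x + 2) ≤ |dsum x| := by
  rw [dsum_eq_tail x]
  refine tail_lower _ (zd_le_one x) (zd_adj x) _ _ ?_ ?_
  · have h1 := minIdx_mem x hx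
    have h2 := zd_le_one x (minIdx x)
    omega
  · have := minIdx_le_succ x hx
    omega

/-- Every integer is at distance at least `Β ^ (minIdx x + 2)` from `Φ * x`. -/
lemma int_far (x : ℕ) (hx : 0 < x) (M : ℕ) :
    Β ^ (minIdx x + 2) ≤ |Φ * (x:ℝ) - (M:ℝ)| := by
  set m := minIdx x with hmdef
  have hm2 : 2 ≤ m := minIdx_two_le x hx
  rw [gold_mul_eq]
  by_cases hM : M = zshift x
  · subst hM
    have : (zshift x : ℝ) - dsum x - (zshift x : ℝ) = -dsum x := by ring
    rw [this, abs_neg]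
    exact dsum_ge x hx
  · have hfar : (1:ℝ) ≤ |(zshift x : ℝ) - (M:ℝ)| := by
      have hne : zshift x ≠ M := fun h => hM h.symm
      have h1 : (1:ℤ) ≤ |(zshift x : ℤ) - (M:ℤ)| :=
        Int.one_le_abs (sub_ne_zero.mpr (by exact_mod_cast hne))
      have h2 : ((|(zshift x : ℤ) - (M:ℤ)| : ℤ) : ℝ) = |(zshift x : ℝ) - (M:ℝ)| := by
        push_cast
        rfl
      calc (1:ℝ) ≤ ((|(zshift x : ℤ) - (M:ℤ)| : ℤ) : ℝ) := by exact_mod_cast h1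
      _ = |(zshift x : ℝ) - (M:ℝ)| := h2
    have htri : |(zshift x : ℝ) - (M:ℝ)| - |dsum x|
        ≤ |(zshift x : ℝ) - dsum x - (M:ℝ)| := by
      have := abs_add_le ((zshift x : ℝ) - dsum x - (M:ℝ)) (dsum x)
      have he : (zshift x : ℝ) - dsum x - (M:ℝ) + dsum x = (zshift x : ℝ) - (M:ℝ) := by ring
      rw [he] at this
      linarith
    have hds : |dsum x| ≤ Β := by
      calc |dsum x| ≤ Φ * Β ^ m := dsum_le x
      _ ≤ Φ * Β ^ 2 := by
          have := pow_le_pow_of_le_one (le_of_lt hBpos) (le_of_lt hB1) hm2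
          nlinarith [goldenRatio_pos]
      _ = Β := by
          have h := pow_key1 1
          rw [pow_one] at h
          rw [show 1 + 1 = 2 from rfl] at h
          exact h
    have hBm : Β ^ (m + 2) ≤ Β ^ 2 :=
      pow_le_pow_of_le_one (le_of_lt hBpos) (le_of_lt hB1) (by omega)
    have hB2 := hBsq
    calc Β ^ (m+2) ≤ Β ^ 2 := hBm
    _ = 1 - Β := hB2
    _ ≤ |(zshift x : ℝ) - (M:ℝ)| - |dsum x| := by linarith
    _ ≤ |(zshift x : ℝ) - dsum x - (M:ℝ)| := htri

end Analytic2

section Analytic3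

open Real goldenRatio

local notation "Φ" => goldenRatio
local notation "Β" => (goldenRatio⁻¹ : ℝ)

lemma nat_le_gold_pow (c : ℕ) : (c:ℝ) ≤ Φ ^ (2*c) := by
  have h1 : (c:ℝ) < 2 ^ c := by exact_mod_cast Nat.lt_two_pow_self (n := c)
  have h2 : (2:ℝ) ≤ Φ ^ 2 := by nlinarith [goldenRatio_sq, one_lt_goldenRatio]
  have h3 : (2:ℝ)^c ≤ (Φ ^ 2) ^ c := pow_le_pow_left₀ (by norm_num) h2 c
  rw [← pow_mul] at h3
  calc (c:ℝ) ≤ 2^c := le_of_lt h1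
  _ ≤ Φ ^ (2*c) := h3

lemma minIdx_mul (c x : ℕ) (hc : 1 ≤ c) (hx : 0 < x) :
    minIdx x ≤ minIdx (c * x) + (2*c + 4) := by
  by_contra hcon
  push_neg at hcon
  set m := minIdx x with hmd
  set j := minIdx (c * x) with hjd
  have hcx : 0 < c * x := Nat.mul_pos (by omega) hx
  have h1 : Β ^ (j + 2) ≤ |Φ * ((c*x : ℕ):ℝ) - ((c * zshift x : ℕ):ℝ)| :=
    int_far (c*x) hcx (c * zshift x)
  have h3 : Φ * (x:ℝ) - (zshift x : ℝ) = -dsum x := by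
    have := gold_mul_eq x; linarith
  have h4 : |Φ * ((c*x:ℕ):ℝ) - ((c*zshift x : ℕ):ℝ)| = (c:ℝ) * |dsum x| := by
    have h2 : Φ * ((c*x : ℕ):ℝ) - ((c * zshift x : ℕ):ℝ) = (c:ℝ) * (Φ * (x:ℝ) - (zshift x:ℝ)) := by
      push_cast; ring
    rw [h2, h3, abs_mul, abs_neg, Nat.abs_cast]
  have h5 : Β ^ (j+2) ≤ (c:ℝ) * (Φ * Β ^ m) := by
    rw [h4] at h1
    have hd := dsum_le x
    have hc0 : (0:ℝ) ≤ (c:ℝ) := Nat.cast_nonneg c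
    calc Β ^ (j+2) ≤ (c:ℝ) * |dsum x| := h1
    _ ≤ (c:ℝ) * (Φ * Β ^ m) := by
        apply mul_le_mul_of_nonneg_left hd hc0
  set a := m - j - 2*c - 5 with had
  have hmsplit : m = (j + 2) + (2*c + 3 + a) := by omega
  have h6 : Β ^ m = Β ^ (j+2) * Β ^ (2*c+3+a) := by rw [hmsplit, pow_add]
  have hBj : (0:ℝ) < Β ^ (j+2) := pow_pos hBpos _
  have h7 : 1 ≤ (c:ℝ) * Φ * Β ^ (2*c+3+a) := by
    rw [h6] at h5
    have h5' : 1 * Β ^ (j+2) ≤ ((c:ℝ) * Φ * Β ^ (2*c+3+a)) * Β ^ (j+2) := by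
      rw [one_mul]
      calc Β ^ (j+2) ≤ (c:ℝ) * (Φ * (Β ^ (j+2) * Β ^ (2*c+3+a))) := h5
      _ = ((c:ℝ) * Φ * Β ^ (2*c+3+a)) * Β ^ (j+2) := by ring
    exact le_of_mul_le_mul_right h5' hBj
  have h8 : Φ ^ (2*c+3+a) ≤ (c:ℝ) * Φ := by
    have hmul := mul_le_mul_of_nonneg_right h7 (le_of_lt (pow_pos goldenRatio_pos (2*c+3+a)))
    rw [one_mul, mul_assoc, ← mul_pow, inv_mul_cancel₀ goldenRatio_ne_zero, one_pow, mul_one] at hmul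
    exact hmul
  have h9 : Φ ^ (2*c+2) ≤ (c:ℝ) := by
    have hmono : Φ ^ (2*c+3) ≤ Φ ^ (2*c+3+a) :=
      pow_le_pow_right₀ (le_of_lt one_lt_goldenRatio) (by omega)
    have hstep : Φ ^ (2*c+2) * Φ ≤ (c:ℝ) * Φ := by
      calc Φ ^ (2*c+2) * Φ = Φ ^ (2*c+3) := by rw [← pow_succ]
      _ ≤ Φ ^ (2*c+3+a) := hmono
      _ ≤ (c:ℝ) * Φ := h8
    exact le_of_mul_le_mul_right hstep goldenRatio_pos
  have h10 := nat_le_gold_pow c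
  have h11 : Φ ^ (2*c+2) = Φ ^ (2*c) * Φ ^ 2 := by rw [← pow_add]
  nlinarith [pow_pos goldenRatio_pos (2*c), goldenRatio_sq, one_lt_goldenRatio]

lemma zshift_mul (c x : ℕ) (hc : 1 ≤ c) (hx : 0 < x) (hm : 2*c + 8 ≤ minIdx x) :
    zshift (c * x) = c * zshift x := by
  have hcx : 0 < c * x := Nat.mul_pos (by omega) hx
  set m := minIdx x with hmd
  set j := minIdx (c * x) with hjd
  have hj : m ≤ j + (2*c + 4) := minIdx_mul c x hc hx
  obtain ⟨a, ha⟩ : ∃ a, m = 2*c + 8 + a := ⟨m - (2*c+8), by omega⟩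
  have hja : a + 4 ≤ j := by omega
  have e1 : (zshift (c*x) : ℝ) - (c:ℝ) * (zshift x : ℝ) = dsum (c*x) - (c:ℝ) * dsum x := by
    have g1 := gold_mul_eq (c*x)
    have g2 := gold_mul_eq x
    have hcast : ((c*x : ℕ):ℝ) = (c:ℝ)*(x:ℝ) := by push_cast; ring
    rw [hcast] at g1
    linear_combination (-1 : ℝ) * g1 + (c:ℝ) * g2
  have hd1 : |dsum (c*x)| ≤ Β ^ (a+3) := by
    calc |dsum (c*x)| ≤ Φ * Β ^ j := dsum_le (c*x)
    _ ≤ Φ * Β ^ (a+4) := by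
        have := pow_le_pow_of_le_one (le_of_lt hBpos) (le_of_lt hB1) hja
        nlinarith [goldenRatio_pos]
    _ = Β ^ (a+3) := pow_key1 (a+3)
  have hd2 : (c:ℝ) * |dsum x| ≤ Β ^ (a+7) := by
    have hdle := dsum_le x
    have hcg := nat_le_gold_pow c
    have hpos1 : (0:ℝ) ≤ Φ * Β ^ m := by positivity
    calc (c:ℝ) * |dsum x| ≤ Φ ^ (2*c) * (Φ * Β ^ m) := by
          apply mul_le_mul hcg hdle (abs_nonneg _) (le_of_lt (pow_pos goldenRatio_pos _))
    _ = Φ ^ (2*c+1) * Β ^ ((2*c+1) + (a+7)) := by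
        rw [ha, pow_succ]
        ring_nf
    _ = Β ^ (a+7) := pow_key (2*c+1) (a+7)
  have hlt : |(zshift (c*x) : ℝ) - (c:ℝ) * (zshift x : ℝ)| < 1 := by
    have htri : |(zshift (c*x) : ℝ) - (c:ℝ) * (zshift x : ℝ)|
        ≤ |dsum (c*x)| + (c:ℝ) * |dsum x| := by
      rw [e1]
      calc |dsum (c*x) - (c:ℝ) * dsum x| ≤ |dsum (c*x)| + |(c:ℝ) * dsum x| := abs_sub _ _
      _ = |dsum (c*x)| + (c:ℝ) * |dsum x| := by rw [abs_mul, Nat.abs_cast]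
    have hb3 : Β ^ (a+3) ≤ Β ^ 3 :=
      pow_le_pow_of_le_one (le_of_lt hBpos) (le_of_lt hB1) (by omega)
    have hb7 : Β ^ (a+7) ≤ Β ^ 3 :=
      pow_le_pow_of_le_one (le_of_lt hBpos) (le_of_lt hB1) (by omega)
    have h2b3 : 2 * Β ^ 3 < 1 := by
      have hcube : Β ^ 3 < (3/4:ℝ) ^ 3 := by
        apply pow_lt_pow_left₀ hB34 (le_of_lt hBpos)
        norm_num
      have hc2 : ((3:ℝ)/4)^3 = 27/64 := by norm_num
      rw [hc2] at hcube
      linarith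
    calc |(zshift (c*x) : ℝ) - (c:ℝ) * (zshift x : ℝ)| ≤ |dsum (c*x)| + (c:ℝ) * |dsum x| := htri
    _ ≤ Β ^ (a+3) + Β ^ (a+7) := add_le_add hd1 hd2
    _ ≤ Β ^ 3 + Β ^ 3 := add_le_add hb3 hb7
    _ < 1 := by linarith
  have hint : (zshift (c*x) : ℤ) = (c : ℤ) * (zshift x : ℤ) := by
    by_contra hne
    have h1 : (1:ℤ) ≤ |(zshift (c*x) : ℤ) - (c:ℤ) * (zshift x : ℤ)| :=
      Int.one_le_abs (sub_ne_zero.mpr hne)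
    have h2 : ((|(zshift (c*x) : ℤ) - (c:ℤ) * (zshift x : ℤ)| : ℤ) : ℝ)
        = |(zshift (c*x) : ℝ) - (c:ℝ) * (zshift x : ℝ)| := by
      push_cast
      rfl
    have h3 : (1:ℝ) ≤ |(zshift (c*x) : ℝ) - (c:ℝ) * (zshift x : ℝ)| := by
      rw [← h2]
      exact_mod_cast h1
    linarith
  exact_mod_cast hint

end Analytic3

lemma le_fib_two_mul : ∀ c : ℕ, c ≤ Nat.fib (2*c)
  | 0 => by simp
  | (c+1) => by
      have h1 := le_fib_two_mul c
      have h2 : Nat.fib (2*(c+1)) = Nat.fib (2*c) + Nat.fib (2*c+1) := by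
        rw [show 2*(c+1) = 2*c + 2 from by ring]
        exact Nat.fib_add_two
      have h3 : 1 ≤ Nat.fib (2*c+1) := Nat.fib_pos.mpr (by omega)
      omega

lemma fib_mul_fib_le (a K : ℕ) (hK : 1 ≤ K) :
    Nat.fib (a+1) * Nat.fib K ≤ Nat.fib (a + K) := by
  obtain ⟨b, hb⟩ : ∃ b, K = b + 1 := ⟨K - 1, by omega⟩
  subst hb
  have := Nat.fib_add a b
  calc Nat.fib (a+1) * Nat.fib (b+1) ≤ Nat.fib a * Nat.fib b + Nat.fib (a+1) * Nat.fib (b+1) :=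
    Nat.le_add_left _ _
  _ = Nat.fib (a + b + 1) := (Nat.fib_add a b).symm
  _ = Nat.fib (a + (b+1)) := by rw [Nat.add_assoc]

lemma mul_lt_fib (c x K : ℕ) (hc : 1 ≤ c) (hK : 2 ≤ K) (hx : x < Nat.fib K) :
    c * x < Nat.fib (2*c + K) := by
  obtain ⟨a, ha⟩ : ∃ a, 2*c = a + 1 := ⟨2*c - 1, by omega⟩
  have h1 : c ≤ Nat.fib (2*c) := le_fib_two_mul c
  have h2 : Nat.fib (a+1) * Nat.fib K ≤ Nat.fib (a + K) := fib_mul_fib_le a K (by omega)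
  have hfibpos : 0 < Nat.fib (2*c) := Nat.fib_pos.mpr (by omega)
  have h3 : Nat.fib (a + K) ≤ Nat.fib (2*c + K) := Nat.fib_mono (by omega)
  calc c * x ≤ Nat.fib (2*c) * x := Nat.mul_le_mul_right x h1
  _ < Nat.fib (2*c) * Nat.fib K := Nat.mul_lt_mul_of_pos_left hx hfibpos
  _ = Nat.fib (a+1) * Nat.fib K := by rw [ha]
  _ ≤ Nat.fib (2*c + K) := h2.trans h3

/-- Main separation step, for a single multiplier `c`. -/
lemma sphi_mul_add (c q r k n1 n2 : ℕ) (hc : 1 ≤ c) (hcq : c ≤ q) (hr : r = 6*q + 30)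
    (h1 : 0 < n1) (h2 : 0 < n2)
    (hs1 : ∀ i, k - r ≤ i → zeckDigit n1 i = 0)
    (hs2 : ∀ i, i ≤ k + r → zeckDigit n2 i = 0) :
    sphi (c * (n1 + n2)) = sphi (c * n1) + sphi (c * n2) := by
  set K := k - r with hKd
  have hm1 := minIdx_mem n1 h1
  have hm1lt : minIdx n1 < K := by
    by_contra hcon
    exact hm1 (hs1 _ (by omega))
  have hK3 : 3 ≤ K := by
    have := minIdx_two_le n1 h1
    omega
  have hkr : k = K + r := by omega
  have hn1K : ∀ i, K ≤ i → zeckDigit n1 i = 0 := fun i hi => hs1 i (by omega)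
  have hn1f : n1 < Nat.fib K := lt_fib_of_zd n1 K (by omega) hn1K
  have hcn1f : c * n1 < Nat.fib (2*q + K) := by
    have h := mul_lt_fib c n1 K hc (by omega) hn1f
    have := Nat.fib_mono (show 2*c + K ≤ 2*q + K by omega)
    omega
  set t := 2*q + K with htd
  have hhigh : ∀ i, t ≤ i → zeckDigit (c*n1) i = 0 := zd_zero_of_ge (c*n1) t hcn1f
  have hm2 := minIdx_mem n2 h2
  have hm2ge : k + r + 1 ≤ minIdx n2 := by
    by_contra hcon
    exact hm2 (hs2 _ (by omega))
  have hmm2 : minIdx n2 ≤ minIdx (c*n2) + (2*c + 4) := minIdx_mul c n2 hc h2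
  have hlow : ∀ i, i ≤ t + 1 → zeckDigit (c*n2) i = 0 := by
    intro i hi
    apply zd_zero_of_lt_minIdx
    omega
  have hx : 0 < c * n1 := Nat.mul_pos (by omega) h1
  have hy : 0 < c * n2 := Nat.mul_pos (by omega) h2
  rw [mul_add]
  exact sphi_add_sep (c*n1) (c*n2) t hx hy hhigh hlow

/-- Main shift step, for a single multiplier `c`. -/
lemma sphi_mul_shift (c q r n : ℕ) (hc : 1 ≤ c) (hcq : c ≤ q) (hr : r = 6*q + 30)
    (hn : 0 < n) (hv : zv n r = 0) :
    sphi (c * zshift n) = sphi (c * n) := by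
  have hlow : ∀ i, i < r → zeckDigit n i = 0 := by
    intro i hi
    rcases Nat.lt_or_ge i 2 with h | h
    · exact zd_low n i h
    · have hterm : zeckDigit n i * Nat.fib i = 0 := by
        have := Finset.sum_eq_zero_iff.mp hv i (Finset.mem_range.mpr hi)
        exact this
      have : 0 < Nat.fib i := Nat.fib_pos.mpr (by omega)
      have := zd_le_one n i
      rcases Nat.eq_zero_or_pos (zeckDigit n i) with h0 | h0
      · exact h0
      · exfalso
        have : zeckDigit n i * Nat.fib i > 0 := Nat.mul_pos h0 (by omega)
        omega
  have hmge : r ≤ minIdx n := by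
    by_contra hcon
    exact minIdx_mem n hn (hlow _ (by omega))
  have hshift : zshift (c * n) = c * zshift n :=
    zshift_mul c n hc hn (by omega)
  rw [← hshift, sphi_zshift]

end ZeckAux

/-- For integers `q > p ≥ 2`, the function `f(n) = s_φ(pn) + s_φ(qn)` is
quasi-additive with respect to the Zeckendorf expansion: there is `r ≥ 0` such
that `f(n1+n2) = f(n1) + f(n2)` for all positive `n1, n2` that are
`r`-separated at some position `k`, and `f(n) = f(S(n))` whenever `v(n,r) = 0`. -/


theorem quasi_additivity_of_correlation (p q : ℕ) (hp : 2 ≤ p) (hpq : p < q) :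
    ∃ r : ℕ,
      (∀ n1 n2 k : ℕ, 0 < n1 → 0 < n2 → RSep r k n1 n2 →
        sphi (p * (n1 + n2)) + sphi (q * (n1 + n2)) =
          (sphi (p * n1) + sphi (q * n1)) + (sphi (p * n2) + sphi (q * n2))) ∧
      (∀ n : ℕ, 0 < n → zv n r = 0 →
        sphi (p * n) + sphi (q * n) = sphi (p * zshift n) + sphi (q * zshift n)) := by
  refine ⟨6*q + 30, ?_, ?_⟩
  · intro n1 n2 k h1 h2 ⟨hs1, hs2⟩
    have hP := ZeckAux.sphi_mul_add p q (6*q+30) k n1 n2 (by omega) (by omega) rfl h1 h2 hs1 hs2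
    have hQ := ZeckAux.sphi_mul_add q q (6*q+30) k n1 n2 (by omega) (by omega) rfl h1 h2 hs1 hs2
    omega
  · intro n hn hv
    have hP := ZeckAux.sphi_mul_shift p q (6*q+30) n (by omega) (by omega) rfl hn hv
    have hQ := ZeckAux.sphi_mul_shift q q (6*q+30) n (by omega) (by omega) rfl hn hv
    omega
end

section
/- Let q > p ≥ 2 be integers, f(n) = s_φ(pn) + s_φ(qn), and let r ≥ 2 be such that f is r-quasi-additive and such that there exist n', n'' ∈ 𝓑 with f(n') even and f(n'') odd. Then there exists a real number x_1 > 1/φ such that x + x^{r+1}·B(x,−1) ≠ 1 for all complex numbers x with |x| ≤ x_1, where B(x,−1) = Σ_{n∈𝓑} (−1)^{f(n)} x^{ℓ(n)}. -/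
/-- `𝓑'`: positive integers with no decomposition into two positive
`r`-separated parts. -/
def BsetAux (r : ℕ) : Set ℕ :=
  {n | 0 < n ∧ ¬ ∃ n1 n2 k, 0 < n1 ∧ 0 < n2 ∧ n = n1 + n2 ∧ RSep r k n1 n2}

/-- `𝓑 = {n ∈ 𝓑' : v(n, r+1) = F_r}`. -/
def Bset (r : ℕ) : Set ℕ := {n ∈ BsetAux r | zv n (r + 1) = Nat.fib r}

/-- `ℓ(n)`: the unique `k` with `F_{k-1} ≤ n < F_k` (for `n ≥ 1`). -/
noncomputable def zell (n : ℕ) : ℕ := sInf {k | n < Nat.fib k}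

section ZeckBasic

/-- Sum of a valid digit family below `j` is less than `fib j`. -/
lemma rep_sum_lt (e : ℕ → ℕ) (h1 : ∀ i, e i ≤ 1) (h2 : ∀ i, i < 2 → e i = 0)
    (h3 : ∀ i, e i = 1 → e (i + 1) = 0) :
    ∀ j, 1 ≤ j → ∑ i ∈ Finset.range j, e i * Nat.fib i < Nat.fib j := by
  intro j
  induction j using Nat.strong_induction_on with
  | _ j ih =>
    intro hj
    match j, hj with
    | 1, _ => simp [h2 0 (by norm_num)]
    | 2, _ =>
      simp [Finset.sum_range_succ, h2 0 (by norm_num), h2 1 (by norm_num)]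
    | (j+3), _ =>
      rw [Finset.sum_range_succ]
      have he2 : e (j+2) ≤ 1 := h1 _
      interval_cases h : e (j+2)
      · simpa using (ih (j+2) (by omega) (by omega)).trans_le
          (Nat.fib_mono (by omega))
      · have he1 : e (j+1) = 0 := by
          by_contra hne
          have : e (j+1) = 1 := by have := h1 (j+1); omega
          have h0 : e (j+2) = 0 := h3 (j+1) this
          omega
        rw [Finset.sum_range_succ, he1]
        have hlt : ∑ i ∈ Finset.range (j+1), e i * Nat.fib i < Nat.fib (j+1) :=
          ih (j+1) (by omega) (by omega)
        have : Nat.fib (j+3) = Nat.fib (j+1) + Nat.fib (j+2) := by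
          rw [Nat.fib_add_two]
        omega

lemma rep_unique (N : ℕ) : ∀ e e' : ℕ → ℕ, (∀ i, e i ≤ 1) → (∀ i, i < 2 → e i = 0) →
    (∀ i, e i = 1 → e (i + 1) = 0) → (∀ i, e' i ≤ 1) → (∀ i, i < 2 → e' i = 0) →
    (∀ i, e' i = 1 → e' (i + 1) = 0) → (∀ i, N ≤ i → e i = 0) → (∀ i, N ≤ i → e' i = 0) →
    (∑ i ∈ Finset.range N, e i * Nat.fib i = ∑ i ∈ Finset.range N, e' i * Nat.fib i) →
    ∀ i, e i = e' i := by
  induction N with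
  | zero => intro e e' _ _ _ _ _ _ hv hv' _ i; rw [hv i (Nat.zero_le _), hv' i (Nat.zero_le _)]
  | succ N ih =>
    intro e e' h1 h2 h3 h1' h2' h3' hv hv' hsum
    -- top digits agree
    have hkey : ∀ f f' : ℕ → ℕ, (∀ i, f i ≤ 1) → (∀ i, i < 2 → f i = 0) →
        (∀ i, f i = 1 → f (i + 1) = 0) → (∀ i, f' i ≤ 1) → (∀ i, i < 2 → f' i = 0) →
        (∀ i, f' i = 1 → f' (i + 1) = 0) →
        (∑ i ∈ Finset.range (N+1), f i * Nat.fib i = ∑ i ∈ Finset.range (N+1), f' i * Nat.fib i) →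
        f N = 1 → f' N = 0 → False := by
      intro f f' g1 g2 g3 g1' g2' g3' gsum hfN hf'N
      have hN2 : 2 ≤ N := by
        by_contra h
        have := g2 N (by omega); omega
      have hlhs : Nat.fib N ≤ ∑ i ∈ Finset.range (N+1), f i * Nat.fib i := by
        calc Nat.fib N = f N * Nat.fib N := by rw [hfN, one_mul]
        _ ≤ _ := Finset.single_le_sum (f := fun i => f i * Nat.fib i)
            (fun i _ => Nat.zero_le _) (Finset.self_mem_range_succ N)
      have hrhs : ∑ i ∈ Finset.range (N+1), f' i * Nat.fib i < Nat.fib N := by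
        rw [Finset.sum_range_succ, hf'N, zero_mul, add_zero]
        exact rep_sum_lt f' g1' g2' g3' N (by omega)
      omega
    have htop : e N = e' N := by
      by_contra hne
      have hle := h1 N; have hle' := h1' N
      rcases Nat.le_one_iff_eq_zero_or_eq_one.mp hle with h0 | hone
      · rcases Nat.le_one_iff_eq_zero_or_eq_one.mp hle' with h0' | hone'
        · omega
        · exact hkey e' e h1' h2' h3' h1 h2 h3 hsum.symm hone' h0
      · rcases Nat.le_one_iff_eq_zero_or_eq_one.mp hle' with h0' | hone'
        · exact hkey e e' h1 h2 h3 h1' h2' h3' hsum hone h0'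
        · omega
    -- reduce to N
    set d : ℕ → ℕ := fun i => if i = N then 0 else e i with hd
    set d' : ℕ → ℕ := fun i => if i = N then 0 else e' i with hd'
    have hres : ∀ i, d i = d' i := by
      apply ih d d'
      · intro i; simp only [hd]; split
        · exact Nat.zero_le _
        · exact h1 i
      · intro i hi; simp only [hd]; split
        · rfl
        · exact h2 i hi
      · intro i hi
        simp only [hd] at hi ⊢
        split
        · rfl
        · split at hi
          · omega
          · exact h3 i hi
      · intro i; simp only [hd']; split
        · exact Nat.zero_le _
        · exact h1' i
      · intro i hi; simp only [hd']; split
        · rfl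
        · exact h2' i hi
      · intro i hi
        simp only [hd'] at hi ⊢
        split
        · rfl
        · split at hi
          · omega
          · exact h3' i hi
      · intro i hi
        simp only [hd]; split
        · rfl
        · exact hv i (by omega)
      · intro i hi
        simp only [hd']; split
        · rfl
        · exact hv' i (by omega)
      · have hsum' : ∑ i ∈ Finset.range N, e i * Nat.fib i
            = ∑ i ∈ Finset.range N, e' i * Nat.fib i := by
          rw [Finset.sum_range_succ, Finset.sum_range_succ, htop] at hsum
          omega
        calc ∑ i ∈ Finset.range N, d i * Nat.fib i
            = ∑ i ∈ Finset.range N, e i * Nat.fib i := by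
              refine Finset.sum_congr rfl fun i hi => ?_
              have : i ≠ N := by simp at hi; omega
              simp [hd, this]
        _ = ∑ i ∈ Finset.range N, e' i * Nat.fib i := hsum'
        _ = ∑ i ∈ Finset.range N, d' i * Nat.fib i := by
              refine (Finset.sum_congr rfl fun i hi => ?_).symm
              have : i ≠ N := by simp at hi; omega
              simp [hd', this]
    intro i
    rcases eq_or_ne i N with rfl | hne
    · exact htop
    · have := hres i; simpa [hd, hd', hne] using this

end ZeckBasic

section ZeckExists

lemma zeck_exists (n : ℕ) : ∃ e : ℕ → ℕ, (∀ i, e i ≤ 1) ∧ (∀ i, i < 2 → e i = 0) ∧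
    (∀ i, e i = 1 → e (i + 1) = 0) ∧ (∀ i, n + 2 ≤ i → e i = 0) ∧
    n = ∑ i ∈ Finset.range (n + 2), e i * Nat.fib i := by
  induction n using Nat.strong_induction_on with
  | _ n ih =>
    rcases Nat.eq_zero_or_pos n with rfl | hn
    · exact ⟨fun _ => 0, fun _ => Nat.zero_le _, fun _ _ => rfl, by simp, fun _ _ => rfl, by simp⟩
    set k := n.greatestFib with hk
    have hk2 : 2 ≤ k := Nat.le_greatestFib.mpr (by rw [Nat.fib_two]; omega)
    have hfibk : Nat.fib k ≤ n := Nat.fib_greatestFib_le n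
    have hkpos : 0 < Nat.fib k := Nat.fib_pos.mpr (by omega)
    set m := n - Nat.fib k with hm
    have hmn : m < n := Nat.sub_lt hn hkpos
    obtain ⟨e', g1, g2, g3, g4, g5⟩ := ih m hmn
    have htop : ∀ i, k - 1 ≤ i → e' i = 0 := by
      intro i hi
      by_contra hne
      have hone : e' i = 1 := by have := g1 i; omega
      have hilt : i < m + 2 := by
        by_contra hge
        exact hne (g4 i (by omega))
      have hfib_le : Nat.fib i ≤ m := by
        have h1 : Nat.fib i ≤ ∑ j ∈ Finset.range (m + 2), e' j * Nat.fib j := by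
          calc Nat.fib i = e' i * Nat.fib i := by rw [hone, one_mul]
          _ ≤ _ := Finset.single_le_sum (f := fun j => e' j * Nat.fib j)
              (fun j _ => Nat.zero_le _) (Finset.mem_range.mpr hilt)
        omega
      have hgm : i ≤ m.greatestFib := Nat.le_greatestFib.mpr hfib_le
      have hb : m.greatestFib ≤ k - 2 := by
        have := Nat.greatestFib_sub_fib_greatestFib_le_greatestFib (n := n) (by omega)
        simpa [← hk, ← hm] using this
      omega
    set e : ℕ → ℕ := fun i => if i = k then 1 else e' i with he
    have edef : ∀ i, e i = if i = k then 1 else e' i := fun _ => rfl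
    refine ⟨e, ?_, ?_, ?_, ?_, ?_⟩
    · intro i; rw [edef]; split
      · exact le_rfl
      · exact g1 i
    · intro i hi
      rw [edef, if_neg (by omega : i ≠ k)]
      exact g2 i hi
    · intro i hi
      rw [edef i] at hi
      by_cases hik : i = k
      · rw [edef, if_neg (by omega : i + 1 ≠ k)]
        exact htop (i+1) (by omega)
      · rw [if_neg hik] at hi
        have hik2 : i ≤ k - 2 := by
          by_contra hgt
          exact absurd (htop i (by omega)) (by omega)
        rw [edef, if_neg (by omega : i + 1 ≠ k)]
        exact g3 i hi
    · intro i hi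
      have hkle : k ≤ n + 1 := Nat.findGreatest_le _
      rw [edef, if_neg (by omega : i ≠ k)]
      exact g4 i (by omega)
    · have hkle : k ≤ n + 1 := Nat.findGreatest_le _
      have hkmem : k ∈ Finset.range (n + 2) := Finset.mem_range.mpr (by omega)
      have hsub : ∑ i ∈ Finset.range (n + 2), e' i * Nat.fib i = m := by
        rw [← Finset.sum_subset (Finset.range_subset_range.mpr (by omega : m + 2 ≤ n + 2))
          (fun i _ hi => by rw [g4 i (by simpa using hi), zero_mul])]
        exact g5.symm
      have hek' : e' k = 0 := htop k (by omega)
      have hsplit' := Finset.add_sum_erase (Finset.range (n+2))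
        (fun i => e' i * Nat.fib i) hkmem
      have herasem : ∑ i ∈ (Finset.range (n + 2)).erase k, e' i * Nat.fib i = m := by
        simp only [hek', zero_mul, zero_add] at hsplit'
        omega
      have herase : ∑ i ∈ (Finset.range (n + 2)).erase k, e i * Nat.fib i
          = ∑ i ∈ (Finset.range (n + 2)).erase k, e' i * Nat.fib i :=
        Finset.sum_congr rfl fun i hi => by
          rw [edef, if_neg (Finset.mem_erase.mp hi).1]
      have heqk : e k * Nat.fib k = Nat.fib k := by rw [edef, if_pos rfl, one_mul]
      calc n = Nat.fib k + m := by omega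
      _ = e k * Nat.fib k + ∑ i ∈ (Finset.range (n + 2)).erase k, e i * Nat.fib i := by
          rw [heqk, herase, herasem]
      _ = ∑ i ∈ Finset.range (n + 2), e i * Nat.fib i :=
          Finset.add_sum_erase (Finset.range (n + 2)) (fun i => e i * Nat.fib i) hkmem

lemma zeckDigit_spec (n : ℕ) : (∀ i, zeckDigit n i ≤ 1) ∧ (∀ i, i < 2 → zeckDigit n i = 0) ∧
    (∀ i, zeckDigit n i = 1 → zeckDigit n (i + 1) = 0) ∧ (∀ i, n + 2 ≤ i → zeckDigit n i = 0) ∧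
    n = ∑ i ∈ Finset.range (n + 2), zeckDigit n i * Nat.fib i := by
  rw [zeckDigit, dif_pos (zeck_exists n)]
  exact Classical.choose_spec (zeck_exists n)

lemma zd_le_one (n i : ℕ) : zeckDigit n i ≤ 1 := (zeckDigit_spec n).1 i
lemma zd_lt_two (n i : ℕ) (h : i < 2) : zeckDigit n i = 0 := (zeckDigit_spec n).2.1 i h
lemma zd_adj (n i : ℕ) (h : zeckDigit n i = 1) : zeckDigit n (i + 1) = 0 :=
  (zeckDigit_spec n).2.2.1 i h
lemma zd_vanish (n i : ℕ) (h : n + 2 ≤ i) : zeckDigit n i = 0 := (zeckDigit_spec n).2.2.2.1 i h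
lemma zd_sum (n : ℕ) : n = ∑ i ∈ Finset.range (n + 2), zeckDigit n i * Nat.fib i :=
  (zeckDigit_spec n).2.2.2.2

/-- Uniqueness interface: any valid finitely-supported digit family representing `n`
is `zeckDigit n`. -/
lemma zeckDigit_unique (n : ℕ) (e : ℕ → ℕ) (N : ℕ) (h1 : ∀ i, e i ≤ 1)
    (h2 : ∀ i, i < 2 → e i = 0) (h3 : ∀ i, e i = 1 → e (i + 1) = 0)
    (hv : ∀ i, N ≤ i → e i = 0)
    (hsum : n = ∑ i ∈ Finset.range N, e i * Nat.fib i) :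
    ∀ i, zeckDigit n i = e i := by
  set M := max N (n + 2) with hM
  have hsum1 : ∑ i ∈ Finset.range M, e i * Nat.fib i
      = ∑ i ∈ Finset.range N, e i * Nat.fib i := by
    rw [← Finset.sum_subset (Finset.range_subset_range.mpr (le_max_left _ _))
      (fun i _ hi => by rw [hv i (by simpa using hi), zero_mul])]
  have hsum2 : ∑ i ∈ Finset.range M, zeckDigit n i * Nat.fib i
      = ∑ i ∈ Finset.range (n + 2), zeckDigit n i * Nat.fib i := by
    rw [← Finset.sum_subset (Finset.range_subset_range.mpr (le_max_right _ _))
      (fun i _ hi => by rw [zd_vanish n i (by simpa using hi), zero_mul])]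
  exact rep_unique M (zeckDigit n) e (zd_le_one n) (zd_lt_two n) (zd_adj n)
    h1 h2 h3 (fun i hi => zd_vanish n i (le_trans (le_max_right _ _) hi))
    (fun i hi => hv i (le_trans (le_max_left _ _) hi))
    (by rw [hsum1, hsum2, ← hsum, ← zd_sum n])

end ZeckExists

section Support

/-- The support of the Zeckendorf expansion. -/
noncomputable def zsupp (n : ℕ) : Finset ℕ :=
  (Finset.range (n + 2)).filter (fun i => zeckDigit n i = 1)

lemma mem_zsupp {n i : ℕ} : i ∈ zsupp n ↔ zeckDigit n i = 1 := by
  constructor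
  · intro h; exact (Finset.mem_filter.mp h).2
  · intro h
    refine Finset.mem_filter.mpr ⟨Finset.mem_range.mpr ?_, h⟩
    by_contra hge
    have := zd_vanish n i (by omega)
    omega

lemma zd_eq_ite (n i : ℕ) : zeckDigit n i = if i ∈ zsupp n then 1 else 0 := by
  split
  · exact mem_zsupp.mp ‹_›
  · have h1 := zd_le_one n i
    have h2 : ¬ zeckDigit n i = 1 := fun h => ‹i ∉ zsupp n› (mem_zsupp.mpr h)
    omega

lemma zsupp_sum (n : ℕ) : n = ∑ i ∈ zsupp n, Nat.fib i := by
  conv_lhs => rw [zd_sum n]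
  rw [zsupp, Finset.sum_filter]
  refine Finset.sum_congr rfl fun i _ => ?_
  rw [zd_eq_ite n i]
  by_cases h : i ∈ zsupp n
  · simp [h, mem_zsupp.mp h]
  · have h2 : ¬ zeckDigit n i = 1 := fun hh => h (mem_zsupp.mpr hh)
    simp [h2, zd_eq_ite n i]

lemma zsupp_two {n i : ℕ} (h : i ∈ zsupp n) : 2 ≤ i := by
  by_contra hlt
  have := zd_lt_two n i (by omega)
  have := mem_zsupp.mp h
  omega

lemma zsupp_adj {n i : ℕ} (h : i ∈ zsupp n) : i + 1 ∉ zsupp n := by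
  intro h2
  have := zd_adj n i (mem_zsupp.mp h)
  have := mem_zsupp.mp h2
  omega

lemma exists_digit_one {n : ℕ} (hn : 0 < n) : ∃ i, zeckDigit n i = 1 := by
  by_contra h
  push_neg at h
  have : n = 0 := by
    rw [zd_sum n]
    refine Finset.sum_eq_zero fun i _ => ?_
    have h1 := zd_le_one n i
    have h2 := h i
    have : zeckDigit n i = 0 := by omega
    rw [this, zero_mul]
  omega

lemma zeckDigit_of_support (P : Finset ℕ) (h2 : ∀ i ∈ P, 2 ≤ i)
    (hadj : ∀ i ∈ P, i + 1 ∉ P) :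
    ∀ j, zeckDigit (∑ i ∈ P, Nat.fib i) j = if j ∈ P then 1 else 0 := by
  set N := P.sup id + 1 with hN
  have hPN : ∀ i ∈ P, i < N := fun i hi => by
    have : i ≤ P.sup id := Finset.le_sup (f := id) hi
    omega
  apply zeckDigit_unique _ _ N
  · intro i; split <;> omega
  · intro i hi
    rw [if_neg]
    intro hmem
    exact absurd (h2 i hmem) (by omega)
  · intro i hi
    split at hi
    · rw [if_neg (hadj i ‹_›)]
    · omega
  · intro i hi
    rw [if_neg]
    intro hmem
    exact absurd (hPN i hmem) (by omega)
  · rw [Finset.sum_congr rfl (fun i (_ : i ∈ Finset.range N) =>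
      (by rw [ite_mul, one_mul, zero_mul] :
        (if i ∈ P then 1 else 0) * Nat.fib i = if i ∈ P then Nat.fib i else 0)),
      Finset.sum_ite_mem]
    congr 1
    exact (Finset.inter_eq_right.mpr fun i hi => Finset.mem_range.mpr (hPN i hi)).symm

lemma zsupp_of_support (P : Finset ℕ) (h2 : ∀ i ∈ P, 2 ≤ i)
    (hadj : ∀ i ∈ P, i + 1 ∉ P) : zsupp (∑ i ∈ P, Nat.fib i) = P := by
  ext j
  rw [mem_zsupp, zeckDigit_of_support P h2 hadj j]
  split <;> simp_all

lemma zell_eq {n t : ℕ} (ht : t ∈ zsupp n) (htop : ∀ i ∈ zsupp n, i ≤ t) :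
    zell n = t + 1 := by
  have hlt : n < Nat.fib (t + 1) := by
    have hsum : ∑ i ∈ Finset.range (n + 2), zeckDigit n i * Nat.fib i
        = ∑ i ∈ Finset.range (t + 1), zeckDigit n i * Nat.fib i := by
      rcases le_or_gt (n + 2) (t + 1) with h | h
      · exact Finset.sum_subset (Finset.range_subset_range.mpr h)
          (fun i _ hi => by rw [zd_vanish n i (by simpa using hi), zero_mul])
      · refine (Finset.sum_subset (Finset.range_subset_range.mpr (by omega : t + 1 ≤ n + 2)) ?_).symm
        intro i hmem hnotmem
        simp only [Finset.mem_range] at hmem hnotmem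
        have hd := zd_le_one n i
        rcases Nat.le_one_iff_eq_zero_or_eq_one.mp hd with h0 | h1
        · rw [h0, zero_mul]
        · exact absurd (htop i (mem_zsupp.mpr h1)) (by omega)
    have e1 : n = ∑ i ∈ Finset.range (t + 1), zeckDigit n i * Nat.fib i := by
      conv_lhs => rw [zd_sum n]
      exact hsum
    rw [e1]
    exact rep_sum_lt _ (zd_le_one n) (zd_lt_two n) (zd_adj n) (t + 1) (by omega)
  have hge : Nat.fib t ≤ n := by
    calc Nat.fib t ≤ ∑ i ∈ zsupp n, Nat.fib i :=
      Finset.single_le_sum (fun i _ => Nat.zero_le _) ht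
    _ = n := (zsupp_sum n).symm
  have hmem : t + 1 ∈ {k | n < Nat.fib k} := hlt
  have h1 : zell n ≤ t + 1 := Nat.sInf_le hmem
  have h2 : ¬ zell n < t + 1 := by
    intro h
    have hmem2 : zell n ∈ {k | n < Nat.fib k} := Nat.sInf_mem ⟨t + 1, hmem⟩
    have : Nat.fib (zell n) ≤ Nat.fib t := Nat.fib_mono (by omega)
    have : n < Nat.fib (zell n) := hmem2
    omega
  omega

lemma zeckDigit_add_of_sep {r k n1 n2 : ℕ} (hsep : RSep r k n1 n2) :
    ∀ i, zeckDigit (n1 + n2) i = zeckDigit n1 i + zeckDigit n2 i := by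
  obtain ⟨hs1, hs2⟩ := hsep
  have key1 : ∀ i, zeckDigit n1 i = 1 → i < k - r := by
    intro i h
    by_contra hge
    have := hs1 i (by omega)
    omega
  have key2 : ∀ i, zeckDigit n2 i = 1 → k + r < i := by
    intro i h
    by_contra hle
    have := hs2 i (by omega)
    omega
  apply zeckDigit_unique _ _ (n1 + n2 + 2)
  · intro i
    have h1 := zd_le_one n1 i
    have h2 := zd_le_one n2 i
    rcases Nat.le_one_iff_eq_zero_or_eq_one.mp h1 with e1 | e1 <;>
      rcases Nat.le_one_iff_eq_zero_or_eq_one.mp h2 with e2 | e2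
    · omega
    · omega
    · omega
    · have := key1 i e1; have := key2 i e2; omega
  · intro i hi
    rw [zd_lt_two n1 i hi, zd_lt_two n2 i hi]
  · intro i hi
    have h1 := zd_le_one n1 i
    have h2 := zd_le_one n2 i
    rcases Nat.le_one_iff_eq_zero_or_eq_one.mp h1 with e1 | e1 <;>
      rcases Nat.le_one_iff_eq_zero_or_eq_one.mp h2 with e2 | e2
    · omega
    · -- n2 digit is 1
      have hgt := key2 i e2
      have ha2 := zd_adj n2 i e2
      have ha1 : zeckDigit n1 (i + 1) = 0 := hs1 (i + 1) (by omega)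
      omega
    · -- n1 digit is 1
      have hlt := key1 i e1
      have ha1 := zd_adj n1 i e1
      have ha2 : zeckDigit n2 (i + 1) = 0 := hs2 (i + 1) (by omega)
      omega
    · have := key1 i e1; have := key2 i e2; omega
  · intro i hi
    rw [zd_vanish n1 i (by omega), zd_vanish n2 i (by omega)]
  · have hext : ∀ m : ℕ, m ≤ n1 + n2 → (m = ∑ i ∈ Finset.range (n1 + n2 + 2),
        zeckDigit m i * Nat.fib i) := by
      intro m hm
      conv_lhs => rw [zd_sum m]
      exact Finset.sum_subset (Finset.range_subset_range.mpr (by omega : m + 2 ≤ n1 + n2 + 2))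
        (fun i _ hi => by rw [zd_vanish m i (by simpa using hi), zero_mul])
    calc n1 + n2 = (∑ i ∈ Finset.range (n1 + n2 + 2), zeckDigit n1 i * Nat.fib i)
        + ∑ i ∈ Finset.range (n1 + n2 + 2), zeckDigit n2 i * Nat.fib i := by
          rw [← hext n1 (by omega), ← hext n2 (by omega)]
    _ = ∑ i ∈ Finset.range (n1 + n2 + 2),
        (zeckDigit n1 i + zeckDigit n2 i) * Nat.fib i := by
          rw [← Finset.sum_add_distrib]
          exact Finset.sum_congr rfl fun i _ => (add_mul _ _ _).symm

end Support

section BsetStructure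

variable {r n : ℕ}

lemma bset_low (hr : 2 ≤ r) (hn : n ∈ Bset r) :
    zeckDigit n r = 1 ∧ ∀ i, i < r → zeckDigit n i = 0 := by
  have hzv : ∑ i ∈ Finset.range (r + 1), zeckDigit n i * Nat.fib i = Nat.fib r := hn.2
  rw [Finset.sum_range_succ] at hzv
  have hfibr : 0 < Nat.fib r := Nat.fib_pos.mpr (by omega)
  have hdr : zeckDigit n r = 1 := by
    by_contra hne
    have h0 : zeckDigit n r = 0 := by have := zd_le_one n r; omega
    rw [h0, zero_mul, add_zero] at hzv
    have := rep_sum_lt (zeckDigit n) (zd_le_one n) (zd_lt_two n) (zd_adj n) r (by omega)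
    omega
  refine ⟨hdr, fun i hi => ?_⟩
  rw [hdr, one_mul] at hzv
  have hzero : ∑ i ∈ Finset.range r, zeckDigit n i * Nat.fib i = 0 := by omega
  have hzi := Finset.sum_eq_zero_iff.mp hzero i (Finset.mem_range.mpr hi)
  rcases Nat.lt_or_ge i 2 with h2 | h2
  · exact zd_lt_two n i h2
  · have hfib : 0 < Nat.fib i := Nat.fib_pos.mpr (by omega)
    rcases Nat.mul_eq_zero.mp hzi with h | h
    · exact h
    · omega

lemma bset_r_mem (hr : 2 ≤ r) (hn : n ∈ Bset r) : r ∈ zsupp n :=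
  mem_zsupp.mpr (bset_low hr hn).1

lemma bset_gap (hr : 2 ≤ r) (hn : n ∈ Bset r) {a b : ℕ} (ha : a ∈ zsupp n)
    (hb : b ∈ zsupp n) (hab : a < b)
    (hbetween : ∀ c, a < c → c < b → c ∉ zsupp n) : b - a ≤ 2 * r + 1 := by
  by_contra hgt
  have hbge : a + 2 * r + 2 ≤ b := by omega
  set P1 := (zsupp n).filter (fun i => i ≤ a) with hP1
  set P2 := (zsupp n).filter (fun i => ¬ i ≤ a) with hP2
  set n1 := ∑ i ∈ P1, Nat.fib i with hn1
  set n2 := ∑ i ∈ P2, Nat.fib i with hn2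
  have hsplit : n1 + n2 = n := by
    rw [hn1, hn2, Finset.sum_filter_add_sum_filter_not]
    exact (zsupp_sum n).symm
  have hP1sub : P1 ⊆ zsupp n := Finset.filter_subset _ _
  have hP2sub : P2 ⊆ zsupp n := Finset.filter_subset _ _
  have hd1 : ∀ j, zeckDigit n1 j = if j ∈ P1 then 1 else 0 :=
    zeckDigit_of_support P1 (fun i hi => zsupp_two (hP1sub hi))
      (fun i hi h1 => zsupp_adj (hP1sub hi) (hP1sub h1))
  have hd2 : ∀ j, zeckDigit n2 j = if j ∈ P2 then 1 else 0 :=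
    zeckDigit_of_support P2 (fun i hi => zsupp_two (hP2sub hi))
      (fun i hi h1 => zsupp_adj (hP2sub hi) (hP2sub h1))
  have hP2b : ∀ i ∈ P2, b ≤ i := by
    intro i hi
    rw [hP2, Finset.mem_filter] at hi
    by_contra hlt
    exact hbetween i (by omega) (by omega) hi.1
  have hsep : RSep r (a + r + 1) n1 n2 := by
    constructor
    · intro i hi
      rw [hd1, if_neg]
      intro hmem
      rw [hP1, Finset.mem_filter] at hmem
      omega
    · intro i hi
      rw [hd2, if_neg]
      intro hmem
      have := hP2b i hmem
      omega
  have hpos1 : 0 < n1 := by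
    have haP1 : a ∈ P1 := by rw [hP1, Finset.mem_filter]; exact ⟨ha, le_rfl⟩
    have : Nat.fib a ≤ n1 := Finset.single_le_sum (fun i _ => Nat.zero_le _) haP1
    have : 0 < Nat.fib a := Nat.fib_pos.mpr (by have := zsupp_two ha; omega)
    omega
  have hpos2 : 0 < n2 := by
    have hbP2 : b ∈ P2 := by rw [hP2, Finset.mem_filter]; exact ⟨hb, by omega⟩
    have : Nat.fib b ≤ n2 := Finset.single_le_sum (fun i _ => Nat.zero_le _) hbP2
    have : 0 < Nat.fib b := Nat.fib_pos.mpr (by have := zsupp_two hb; omega)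
    omega
  exact hn.1.2 ⟨n1, n2, a + r + 1, hpos1, hpos2, hsplit.symm, hsep⟩

lemma bset_zell_eq_max (hr : 2 ≤ r) (hn : n ∈ Bset r) (hne : (zsupp n).Nonempty) :
    zell n = (zsupp n).max' hne + 1 :=
  zell_eq ((zsupp n).max'_mem hne) (fun i hi => (zsupp n).le_max' i hi)

lemma bset_zell_ge (hr : 2 ≤ r) (hn : n ∈ Bset r) : r + 1 ≤ zell n := by
  have hne : (zsupp n).Nonempty := ⟨r, bset_r_mem hr hn⟩
  rw [bset_zell_eq_max hr hn hne]
  have := (zsupp n).le_max' r (bset_r_mem hr hn)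
  omega

lemma zell_fib (hr : 2 ≤ r) : zell (Nat.fib r) = r + 1 := by
  have hsupp : zsupp (Nat.fib r) = {r} := by
    have : Nat.fib r = ∑ i ∈ ({r} : Finset ℕ), Nat.fib i := by simp
    rw [this]
    exact zsupp_of_support {r} (by simpa using hr) (by simp)
  refine zell_eq (t := r) ?_ ?_
  · rw [hsupp]; simp
  · intro i hi; rw [hsupp] at hi; simp at hi; omega

/-- If `n ∈ 𝓑` has only `r` in its support, then `n = fib r`. -/
lemma bset_eq_fib_of_max (hr : 2 ≤ r) (hn : n ∈ Bset r) (hne : (zsupp n).Nonempty)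
    (hmax : (zsupp n).max' hne = r) : n = Nat.fib r := by
  have hsupp : zsupp n = {r} := by
    apply Finset.Subset.antisymm
    · intro i hi
      have h1 : i ≤ r := hmax ▸ (zsupp n).le_max' i hi
      have h2 : 2 ≤ i := zsupp_two hi
      rcases Nat.lt_or_ge i r with h | h
      · exact absurd (mem_zsupp.mp hi) (by rw [(bset_low hr hn).2 i h]; omega)
      · simp [show i = r by omega]
    · intro i hi
      simp only [Finset.mem_singleton] at hi
      subst hi
      exact bset_r_mem hr hn
  calc n = ∑ i ∈ zsupp n, Nat.fib i := zsupp_sum n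
  _ = Nat.fib r := by rw [hsupp]; simp

end BsetStructure

noncomputable def zrho (n : ℕ) : ℕ := n - Nat.fib (zell n - 1)
noncomputable def zgap (n : ℕ) : ℕ := zell n - zell (zrho n)

lemma bset_step {r n : ℕ} (hr : 2 ≤ r) (hn : n ∈ Bset r) (hne : n ≠ Nat.fib r) :
    zrho n ∈ Bset r ∧ 2 ≤ zgap n ∧ zgap n ≤ 2 * r + 1 ∧
    zell n = zgap n + zell (zrho n) ∧
    n = zrho n + Nat.fib (zell (zrho n) - 1 + zgap n) := by
  have hsne : (zsupp n).Nonempty := ⟨r, bset_r_mem hr hn⟩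
  set t := (zsupp n).max' hsne with ht
  have hzelln : zell n = t + 1 := bset_zell_eq_max hr hn hsne
  have htmem : t ∈ zsupp n := (zsupp n).max'_mem hsne
  have hrt : r < t := by
    have hle : r ≤ t := (zsupp n).le_max' r (bset_r_mem hr hn)
    rcases eq_or_lt_of_le hle with heq | hlt
    · exact absurd (bset_eq_fib_of_max hr hn hsne heq.symm) hne
    · exact hlt
  have herase_ne : ((zsupp n).erase t).Nonempty :=
    ⟨r, Finset.mem_erase.mpr ⟨by omega, bset_r_mem hr hn⟩⟩
  set s := ((zsupp n).erase t).max' herase_ne with hs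
  have hsmem' : s ∈ (zsupp n).erase t := Finset.max'_mem _ herase_ne
  have hsmem : s ∈ zsupp n := (Finset.mem_erase.mp hsmem').2
  have hsnet : s ≠ t := (Finset.mem_erase.mp hsmem').1
  have hst : s < t := lt_of_le_of_ne ((zsupp n).le_max' s hsmem) hsnet
  have hrs : r ≤ s := Finset.le_max' _ r (Finset.mem_erase.mpr ⟨by omega, bset_r_mem hr hn⟩)
  have hbetween : ∀ c, s < c → c < t → c ∉ zsupp n := by
    intro c h1 h2 hc
    have : c ∈ (zsupp n).erase t := Finset.mem_erase.mpr ⟨by omega, hc⟩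
    have := Finset.le_max' _ c this
    omega
  have hgap2 : s + 2 ≤ t := by
    have hadj := zsupp_adj hsmem
    have : t ≠ s + 1 := fun h => hadj (h ▸ htmem)
    omega
  have hgapb : t - s ≤ 2 * r + 1 := bset_gap hr hn hsmem htmem hst hbetween
  set m := ∑ i ∈ (zsupp n).erase t, Nat.fib i with hm
  have herase2 : ∀ i ∈ (zsupp n).erase t, 2 ≤ i := fun i hi =>
    zsupp_two (Finset.mem_erase.mp hi).2
  have heraseadj : ∀ i ∈ (zsupp n).erase t, i + 1 ∉ (zsupp n).erase t := fun i hi h1 =>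
    zsupp_adj (Finset.mem_erase.mp hi).2 (Finset.mem_erase.mp h1).2
  have hmsupp : zsupp m = (zsupp n).erase t := zsupp_of_support _ herase2 heraseadj
  have hmd : ∀ j, zeckDigit m j = if j ∈ (zsupp n).erase t then 1 else 0 :=
    zeckDigit_of_support _ herase2 heraseadj
  have hnm : n = m + Nat.fib t := by
    calc n = ∑ i ∈ zsupp n, Nat.fib i := zsupp_sum n
    _ = Nat.fib t + ∑ i ∈ (zsupp n).erase t, Nat.fib i :=
        (Finset.add_sum_erase _ _ htmem).symm
    _ = m + Nat.fib t := by rw [hm, Nat.add_comm]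
  have hmpos : 0 < m := by
    have h1 : Nat.fib r ≤ m := Finset.single_le_sum (fun i _ => Nat.zero_le _)
      (Finset.mem_erase.mpr ⟨by omega, bset_r_mem hr hn⟩)
    have h2 : 0 < Nat.fib r := Nat.fib_pos.mpr (by omega)
    omega
  -- m ∈ Bset r
  have hmB : m ∈ Bset r := by
    constructor
    · refine ⟨hmpos, ?_⟩
      rintro ⟨n1, n2, k, hp1, hp2, heq, hsep⟩
      have hadd := zeckDigit_add_of_sep hsep
      have hdm : ∀ i, zeckDigit m i = zeckDigit n1 i + zeckDigit n2 i := by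
        rw [heq]; exact hadd
      obtain ⟨a, ha1⟩ := exists_digit_one hp1
      obtain ⟨b, hb1⟩ := exists_digit_one hp2
      have hak : a < k - r := by
        by_contra hge
        have := hsep.1 a (by omega)
        omega
      have hbk : k + r < b := by
        by_contra hle
        have := hsep.2 b (by omega)
        omega
      have haS : a ∈ zsupp m := by
        rw [mem_zsupp, hdm a, ha1, hsep.2 a (by omega)]
      have hbS : b ∈ zsupp m := by
        rw [mem_zsupp, hdm b, hb1, hsep.1 b (by omega)]
      set A := (zsupp m).filter (fun i => i < k - r) with hA
      have hAne : A.Nonempty := ⟨a, Finset.mem_filter.mpr ⟨haS, hak⟩⟩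
      set astar := A.max' hAne with hastar
      have hastarA := A.max'_mem hAne
      have hastarS : astar ∈ zsupp m := (Finset.mem_filter.mp hastarA).1
      have hastark : astar < k - r := (Finset.mem_filter.mp hastarA).2
      set B := (zsupp m).filter (fun i => astar < i) with hB
      have hBne : B.Nonempty := ⟨b, Finset.mem_filter.mpr ⟨hbS, by omega⟩⟩
      set bstar := B.min' hBne with hbstar
      have hbstarB := B.min'_mem hBne
      have hbstarS : bstar ∈ zsupp m := (Finset.mem_filter.mp hbstarB).1
      have hbstargt : astar < bstar := (Finset.mem_filter.mp hbstarB).2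
      have hbstar_ge : k + r + 1 ≤ bstar := by
        by_contra hlt
        have hd1 : zeckDigit n1 bstar = 0 := by
          apply hsep.1
          by_contra hlt2
          have : bstar ∈ A := Finset.mem_filter.mpr ⟨hbstarS, by omega⟩
          have := A.le_max' bstar this
          omega
        have hd2 : zeckDigit n2 bstar = 0 := hsep.2 bstar (by omega)
        have := mem_zsupp.mp hbstarS
        rw [hdm bstar, hd1, hd2] at this
        omega
      -- transfer to supp n
      have hsubn : zsupp m ⊆ zsupp n := by
        rw [hmsupp]; exact Finset.erase_subset _ _
      have hbstar_le_s : bstar ≤ s := by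
        have : bstar ∈ (zsupp n).erase t := hmsupp ▸ hbstarS
        exact Finset.le_max' _ bstar this
      have hbet : ∀ c, astar < c → c < bstar → c ∉ zsupp n := by
        intro c h1 h2 hc
        have hct : c ≠ t := by omega
        have hcm : c ∈ zsupp m := by
          rw [hmsupp]; exact Finset.mem_erase.mpr ⟨hct, hc⟩
        have : c ∈ B := Finset.mem_filter.mpr ⟨hcm, h1⟩
        have := B.min'_le c this
        omega
      have := bset_gap hr hn (hsubn hastarS) (hsubn hbstarS) hbstargt hbet
      omega
    · show zv m (r + 1) = Nat.fib r
      have hstep : ∀ i ∈ Finset.range (r + 1),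
          zeckDigit m i * Nat.fib i = if i = r then Nat.fib r else 0 := by
        intro i hi
        have hir : i ≤ r := by simpa using Nat.lt_succ_iff.mp (Finset.mem_range.mp hi)
        rcases eq_or_ne i r with rfl | hir'
        · rw [hmd, if_pos (Finset.mem_erase.mpr ⟨by omega, bset_r_mem hr hn⟩),
            if_pos rfl, one_mul]
        · have : i ∉ zsupp n := by
            intro hmem
            have := mem_zsupp.mp hmem
            rw [(bset_low hr hn).2 i (by omega)] at this
            omega
          rw [hmd, if_neg (fun hmem => this (Finset.mem_erase.mp hmem).2),
            if_neg hir', zero_mul]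
      rw [zv, Finset.sum_congr rfl hstep, Finset.sum_ite_eq' (Finset.range (r + 1)) r
        (fun _ => Nat.fib r), if_pos (Finset.mem_range.mpr (by omega))]
  -- zell of m
  have hzellm : zell m = s + 1 := by
    refine zell_eq (t := s) (hmsupp ▸ hsmem') ?_
    intro i hi
    rw [hmsupp] at hi
    exact Finset.le_max' _ i hi
  have hrho : zrho n = m := by
    rw [zrho, hzelln]
    simp only [Nat.add_sub_cancel]
    omega
  have hzgap : zgap n = t - s := by
    rw [zgap, hrho, hzellm, hzelln]
    omega
  refine ⟨hrho ▸ hmB, by omega, by omega, by rw [hrho, hzellm, hzelln]; omega, ?_⟩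
  rw [hrho, hzellm, hzgap]
  have harg : s + 1 - 1 + (t - s) = t := by omega
  rw [harg]
  exact hnm

section SumBound

/-- Partial sums of `t^{ℓ(n)}` over finite subsets of `𝓑` are uniformly bounded. -/
lemma bset_finsum_le {r : ℕ} (hr : 2 ≤ r) {t : ℝ} (ht0 : 0 ≤ t)
    (hσ : (∑ g ∈ Finset.Icc 2 (2 * r + 1), t ^ g) < 1) :
    ∀ u : Finset ℕ, (↑u ⊆ Bset r) → ∑ n ∈ u, t ^ zell n ≤
      t ^ (r + 1) / (1 - ∑ g ∈ Finset.Icc 2 (2 * r + 1), t ^ g) := by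
  set σ : ℝ := ∑ g ∈ Finset.Icc 2 (2 * r + 1), t ^ g with hσdef
  set C : ℝ := t ^ (r + 1) / (1 - σ) with hC
  have hσ0 : 0 ≤ σ := Finset.sum_nonneg fun g _ => pow_nonneg ht0 g
  have hden : 0 < 1 - σ := by linarith
  have hC0 : 0 ≤ C := div_nonneg (pow_nonneg ht0 _) (le_of_lt hden)
  have hCfix : t ^ (r + 1) + σ * C = C := by
    rw [hC]
    field_simp
    ring
  suffices H : ∀ K : ℕ, ∀ u : Finset ℕ, (↑u ⊆ Bset r) → (∀ n ∈ u, zell n ≤ K) →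
      ∑ n ∈ u, t ^ zell n ≤ C by
    intro u hu
    exact H (u.sup zell) u hu (fun n hn => Finset.le_sup (f := zell) hn)
  intro K
  induction K using Nat.strong_induction_on with
  | _ K ih =>
    intro u hu hK
    rcases Nat.lt_or_ge K 1 with hK0 | hK1
    · have : u = ∅ := by
        rw [Finset.eq_empty_iff_forall_notMem]
        intro n hn
        have := bset_zell_ge hr (hu hn)
        have := hK n hn
        omega
      rw [this, Finset.sum_empty]
      exact hC0
    rw [← Finset.sum_filter_add_sum_filter_not u (fun n => n = Nat.fib r)]
    have hpart1 : ∑ n ∈ u.filter (fun n => n = Nat.fib r), t ^ zell n ≤ t ^ (r + 1) := by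
      rcases Finset.eq_empty_or_nonempty (u.filter (fun n => n = Nat.fib r)) with he | hne
      · rw [he, Finset.sum_empty]; exact pow_nonneg ht0 _
      · have hsub : u.filter (fun n => n = Nat.fib r) = {Nat.fib r} := by
          apply Finset.Subset.antisymm
          · intro n hn
            simp only [Finset.mem_filter] at hn
            simp [hn.2]
          · intro n hn
            simp only [Finset.mem_singleton] at hn
            obtain ⟨n0, hn0⟩ := hne
            have h2 := Finset.mem_filter.mp hn0
            have hnn0 : n = n0 := by rw [hn, h2.2]
            exact hnn0 ▸ hn0
        rw [hsub, Finset.sum_singleton, zell_fib hr]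
    have hpart2 : ∑ n ∈ u.filter (fun n => ¬ n = Nat.fib r), t ^ zell n ≤ σ * C := by
      set u' := u.filter (fun n => ¬ n = Nat.fib r) with hu'
      have hu'B : ∀ n ∈ u', n ∈ Bset r ∧ n ≠ Nat.fib r := by
        intro n hn
        have := Finset.mem_filter.mp hn
        exact ⟨hu this.1, this.2⟩
      have hmaps : ∀ n ∈ u', zgap n ∈ Finset.Icc 2 (2 * r + 1) := by
        intro n hn
        obtain ⟨hB, hne⟩ := hu'B n hn
        obtain ⟨_, h2, h3, _, _⟩ := bset_step hr hB hne
        exact Finset.mem_Icc.mpr ⟨h2, h3⟩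
      rw [← Finset.sum_fiberwise_of_maps_to hmaps (fun n => t ^ zell n)]
      have hfiber : ∀ g ∈ Finset.Icc 2 (2 * r + 1),
          ∑ n ∈ u'.filter (fun n => zgap n = g), t ^ zell n ≤ t ^ g * C := by
        intro g hg
        have hgIcc := Finset.mem_Icc.mp hg
        set v := u'.filter (fun n => zgap n = g) with hv
        have hvB : ∀ n ∈ v, n ∈ Bset r ∧ n ≠ Nat.fib r ∧ zgap n = g := by
          intro n hn
          have h1 := Finset.mem_filter.mp hn
          obtain ⟨hB, hne⟩ := hu'B n h1.1
          exact ⟨hB, hne, h1.2⟩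
        have hterm : ∀ n ∈ v, t ^ zell n = t ^ g * t ^ zell (zrho n) := by
          intro n hn
          obtain ⟨hB, hne, hgap⟩ := hvB n hn
          obtain ⟨_, _, _, hzeq, _⟩ := bset_step hr hB hne
          rw [hzeq, hgap, pow_add]
        rw [Finset.sum_congr rfl hterm, ← Finset.mul_sum]
        have hinj : Set.InjOn zrho ↑v := by
          intro n1 hn1 n2 hn2 heq
          obtain ⟨hB1, hne1, hg1⟩ := hvB n1 hn1
          obtain ⟨hB2, hne2, hg2⟩ := hvB n2 hn2
          obtain ⟨_, _, _, _, hrec1⟩ := bset_step hr hB1 hne1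
          obtain ⟨_, _, _, _, hrec2⟩ := bset_step hr hB2 hne2
          rw [hrec1, hrec2, heq, hg1, hg2]
        have himage : ∑ m ∈ v.image zrho, t ^ zell m = ∑ n ∈ v, t ^ zell (zrho n) :=
          Finset.sum_image (fun a ha b hb h => hinj ha hb h)
        rw [← himage]
        have himB : ↑(v.image zrho) ⊆ Bset r := by
          intro m hm
          simp only [Finset.coe_image, Set.mem_image, Finset.mem_coe] at hm
          obtain ⟨n, hn, rfl⟩ := hm
          obtain ⟨hB, hne, _⟩ := hvB n hn
          exact (bset_step hr hB hne).1
        have himK : ∀ m ∈ v.image zrho, zell m ≤ K - 2 := by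
          intro m hm
          rw [Finset.mem_image] at hm
          obtain ⟨n, hn, rfl⟩ := hm
          obtain ⟨hB, hne, hgap⟩ := hvB n hn
          obtain ⟨_, h2, _, hzeq, _⟩ := bset_step hr hB hne
          have hnu : n ∈ u := (Finset.mem_filter.mp (Finset.mem_filter.mp hn).1).1
          have := hK n hnu
          omega
        have := ih (K - 2) (by omega) (v.image zrho) himB himK
        exact mul_le_mul_of_nonneg_left this (pow_nonneg ht0 g)
      calc ∑ g ∈ Finset.Icc 2 (2 * r + 1), ∑ n ∈ u'.filter (fun n => zgap n = g), t ^ zell n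
          ≤ ∑ g ∈ Finset.Icc 2 (2 * r + 1), t ^ g * C := Finset.sum_le_sum hfiber
      _ = σ * C := by rw [hσdef, Finset.sum_mul]
    linarith

end SumBound

section Analysis

lemma sigma_eval {x : ℝ} (hx : x ^ 2 = 1 - x) (r : ℕ) :
    ∑ g ∈ Finset.Icc 2 (2 * r + 1), x ^ g = 1 - x ^ (2 * r) := by
  induction r with
  | zero => simp
  | succ r ih =>
    have h1 : 2 * (r + 1) + 1 = (2 * r + 2) + 1 := by ring
    rw [h1, Finset.sum_Icc_succ_top (by omega : 2 ≤ 2 * r + 2 + 1),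
      Finset.sum_Icc_succ_top (by omega : 2 ≤ 2 * r + 1 + 1)]
    have h2 : 2 * r + 1 + 1 = 2 * r + 2 := by ring
    rw [h2, ih]
    have h3 : 2 * (r + 1) = 2 * r + 2 := by ring
    rw [h3]
    linear_combination (x ^ (2 * r) * (x + 1)) * hx

lemma bset_tsum_bound {r : ℕ} (hr : 2 ≤ r) {t : ℝ} (ht0 : 0 ≤ t)
    (hσ : (∑ g ∈ Finset.Icc 2 (2 * r + 1), t ^ g) < 1) :
    Summable (fun n : ↥(Bset r) => t ^ zell (n : ℕ)) ∧
    (∑' n : ↥(Bset r), t ^ zell (n : ℕ)) ≤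
      t ^ (r + 1) / (1 - ∑ g ∈ Finset.Icc 2 (2 * r + 1), t ^ g) := by
  have hb : ∀ v : Finset ↥(Bset r), ∑ i ∈ v, t ^ zell (i : ℕ) ≤
      t ^ (r + 1) / (1 - ∑ g ∈ Finset.Icc 2 (2 * r + 1), t ^ g) := by
    intro v
    have himg : ∑ n ∈ v.image (fun i : ↥(Bset r) => (i : ℕ)), t ^ zell n
        = ∑ i ∈ v, t ^ zell (i : ℕ) :=
      Finset.sum_image (fun a _ b _ h => Subtype.coe_injective h)
    rw [← himg]
    apply bset_finsum_le hr ht0 hσ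
    intro n hn
    simp only [Finset.coe_image, Set.mem_image, Finset.mem_coe] at hn
    obtain ⟨i, _, rfl⟩ := hn
    exact i.2
  have hnn : 0 ≤ fun n : ↥(Bset r) => t ^ zell (n : ℕ) :=
    fun n => pow_nonneg ht0 _
  exact ⟨summable_of_sum_le hnn hb, Summable.tsum_le_of_sum_le (summable_of_sum_le hnn hb) hb⟩

end Analysis


section Claim2

lemma Fnorm (f : ℕ → ℕ) (x : ℂ) (r : ℕ) (n : ↥(Bset r)) :
    ‖(-1 : ℂ) ^ (f (n : ℕ)) * x ^ zell (n : ℕ)‖ = ‖x‖ ^ zell (n : ℕ) := by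
  rw [norm_mul, norm_pow, norm_pow, norm_neg, norm_one, one_pow, one_mul]

lemma bset_summable_F {r : ℕ} (hr : 2 ≤ r) (f : ℕ → ℕ) {x : ℂ}
    (hσ : (∑ g ∈ Finset.Icc 2 (2 * r + 1), ‖x‖ ^ g) < 1) :
    Summable (fun n : ↥(Bset r) => (-1 : ℂ) ^ (f (n : ℕ)) * x ^ zell (n : ℕ)) := by
  apply Summable.of_norm
  have heq : (fun n : ↥(Bset r) => ‖(-1 : ℂ) ^ (f (n : ℕ)) * x ^ zell (n : ℕ)‖)
      = fun n : ↥(Bset r) => ‖x‖ ^ zell (n : ℕ) := funext (Fnorm f x r)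
  rw [heq]
  exact (bset_tsum_bound hr (norm_nonneg x) hσ).1

lemma claim2_lemma {r : ℕ} (hr : 2 ≤ r) (f : ℕ → ℕ) {n'' : ℕ} (hn''B : n'' ∈ Bset r)
    (hn''odd : Odd (f n'')) {x : ℂ} (hx : ‖x‖ ≤ 1 / Real.goldenRatio) :
    x + x ^ (r + 1) * (∑' n : ↥(Bset r), (-1 : ℂ) ^ (f (n : ℕ)) * x ^ zell (n : ℕ)) ≠ 1 := by
  intro heq
  set x0 : ℝ := 1 / Real.goldenRatio with hx0def
  have hφ : 1 < Real.goldenRatio := Real.one_lt_goldenRatio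
  have hx0pos : 0 < x0 := div_pos one_pos (by linarith)
  have hx0sq : x0 ^ 2 = 1 - x0 := by
    have hgne : Real.goldenRatio ≠ 0 := Real.goldenRatio_pos.ne'
    rw [hx0def]
    field_simp
    linear_combination (-(1:ℝ)) * (Real.sq_sqrt (by norm_num : (0:ℝ) ≤ 5))
  have hσx0 : (∑ g ∈ Finset.Icc 2 (2 * r + 1), x0 ^ g) = 1 - x0 ^ (2 * r) :=
    sigma_eval hx0sq r
  set t : ℝ := ‖x‖ with htdef
  have ht0 : 0 ≤ t := norm_nonneg x
  have hσmono : (∑ g ∈ Finset.Icc 2 (2 * r + 1), t ^ g)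
      ≤ ∑ g ∈ Finset.Icc 2 (2 * r + 1), x0 ^ g :=
    Finset.sum_le_sum (fun g _ => pow_le_pow_left₀ ht0 hx g)
  have hx0pow : 0 < x0 ^ (2 * r) := pow_pos hx0pos _
  have hσt : (∑ g ∈ Finset.Icc 2 (2 * r + 1), t ^ g) < 1 := by
    rw [hσx0] at hσmono; linarith
  have hσt0 : 0 ≤ ∑ g ∈ Finset.Icc 2 (2 * r + 1), t ^ g :=
    Finset.sum_nonneg fun g _ => pow_nonneg ht0 g
  obtain ⟨hSsum, hSle⟩ := bset_tsum_bound hr ht0 hσt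
  have hFs : Summable (fun n : ↥(Bset r) => (-1 : ℂ) ^ (f (n : ℕ)) * x ^ zell (n : ℕ)) :=
    bset_summable_F hr f hσt
  have hzsum : Summable (fun n : ↥(Bset r) =>
      x ^ (r + 1) * ((-1 : ℂ) ^ (f (n : ℕ)) * x ^ zell (n : ℕ))) := hFs.mul_left _
  have hgsum : Summable (fun n : ↥(Bset r) => t ^ (r + 1) * t ^ zell (n : ℕ)) :=
    hSsum.mul_left _
  have hznorm : ∀ n : ↥(Bset r),
      ‖x ^ (r + 1) * ((-1 : ℂ) ^ (f (n : ℕ)) * x ^ zell (n : ℕ))‖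
        = t ^ (r + 1) * t ^ zell (n : ℕ) := by
    intro n
    rw [norm_mul, norm_pow,
      Fnorm f x r n, htdef]
  have hre_sum : Summable (fun n : ↥(Bset r) =>
      (x ^ (r + 1) * ((-1 : ℂ) ^ (f (n : ℕ)) * x ^ zell (n : ℕ))).re) := by
    apply Summable.of_norm_bounded hgsum
    intro n
    rw [Real.norm_eq_abs, ← hznorm n]
    exact Complex.abs_re_le_norm _
  have hdiffsum : Summable (fun n : ↥(Bset r) =>
      t ^ (r + 1) * t ^ zell (n : ℕ)
        - (x ^ (r + 1) * ((-1 : ℂ) ^ (f (n : ℕ)) * x ^ zell (n : ℕ))).re) :=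
    hgsum.sub hre_sum
  -- take real parts of the equation
  have hzx : (∑' n : ↥(Bset r), x ^ (r + 1) * ((-1 : ℂ) ^ (f (n : ℕ)) * x ^ zell (n : ℕ)))
      = x ^ (r + 1) * (∑' n : ↥(Bset r), (-1 : ℂ) ^ (f (n : ℕ)) * x ^ zell (n : ℕ)) :=
    tsum_mul_left
  have h1 : x.re + (∑' n : ↥(Bset r),
      (x ^ (r + 1) * ((-1 : ℂ) ^ (f (n : ℕ)) * x ^ zell (n : ℕ))).re) = 1 := by
    have h := congrArg Complex.re heq
    rw [Complex.add_re, Complex.one_re, ← hzx, Complex.re_tsum hzsum] at h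
    exact h
  -- bound the real parts
  have htsub : (∑' n : ↥(Bset r), (t ^ (r + 1) * t ^ zell (n : ℕ)
      - (x ^ (r + 1) * ((-1 : ℂ) ^ (f (n : ℕ)) * x ^ zell (n : ℕ))).re))
      = (∑' n : ↥(Bset r), t ^ (r + 1) * t ^ zell (n : ℕ))
        - ∑' n : ↥(Bset r), (x ^ (r + 1) * ((-1 : ℂ) ^ (f (n : ℕ)) * x ^ zell (n : ℕ))).re :=
    Summable.tsum_sub hgsum hre_sum
  set N'' : ↥(Bset r) := ⟨n'', hn''B⟩ with hN''
  have hD : t ^ (r + 1) * t ^ zell (N'' : ℕ)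
      - (x ^ (r + 1) * ((-1 : ℂ) ^ (f (N'' : ℕ)) * x ^ zell (N'' : ℕ))).re
      ≤ (∑' n : ↥(Bset r), (t ^ (r + 1) * t ^ zell (n : ℕ)
        - (x ^ (r + 1) * ((-1 : ℂ) ^ (f (n : ℕ)) * x ^ zell (n : ℕ))).re)) := by
    apply Summable.le_tsum hdiffsum N''
    intro j _
    have := Complex.re_le_norm (x ^ (r + 1) * ((-1 : ℂ) ^ (f (j : ℕ)) * x ^ zell (j : ℕ)))
    rw [hznorm j] at this
    linarith
  have hg_tsum : (∑' n : ↥(Bset r), t ^ (r + 1) * t ^ zell (n : ℕ))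
      = t ^ (r + 1) * ∑' n : ↥(Bset r), t ^ zell (n : ℕ) := tsum_mul_left
  have hxre : x.re ≤ t := Complex.re_le_norm x
  -- the function G is at most 1
  have hden : x0 ^ (2 * r) ≤ 1 - ∑ g ∈ Finset.Icc 2 (2 * r + 1), t ^ g := by
    rw [hσx0] at hσmono; linarith
  have hCt : t ^ (r + 1) * (t ^ (r + 1) / (1 - ∑ g ∈ Finset.Icc 2 (2 * r + 1), t ^ g))
      ≤ 1 - x0 := by
    have h1' : t ^ (r + 1) / (1 - ∑ g ∈ Finset.Icc 2 (2 * r + 1), t ^ g)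
        ≤ t ^ (r + 1) / x0 ^ (2 * r) :=
      div_le_div_of_nonneg_left (pow_nonneg ht0 _) hx0pow hden
    have h2' : t ^ (r + 1) * (t ^ (r + 1) / x0 ^ (2 * r))
        = t ^ (2 * r + 2) / x0 ^ (2 * r) := by
      rw [mul_div_assoc']
      congr 1
      rw [← pow_add]
      congr 1
      omega
    have h3' : t ^ (2 * r + 2) ≤ x0 ^ (2 * r + 2) := pow_le_pow_left₀ ht0 hx _
    have h4' : x0 ^ (2 * r + 2) / x0 ^ (2 * r) = x0 ^ 2 := by
      rw [pow_add]
      field_simp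
    calc t ^ (r + 1) * (t ^ (r + 1) / (1 - ∑ g ∈ Finset.Icc 2 (2 * r + 1), t ^ g))
        ≤ t ^ (r + 1) * (t ^ (r + 1) / x0 ^ (2 * r)) :=
          mul_le_mul_of_nonneg_left h1' (pow_nonneg ht0 _)
    _ = t ^ (2 * r + 2) / x0 ^ (2 * r) := h2'
    _ ≤ x0 ^ (2 * r + 2) / x0 ^ (2 * r) := (div_le_div_iff_of_pos_right hx0pow).mpr h3'
    _ = x0 ^ 2 := h4'
    _ = 1 - x0 := hx0sq
  have hSg : (∑' n : ↥(Bset r), t ^ (r + 1) * t ^ zell (n : ℕ)) ≤ 1 - x0 := by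
    rw [hg_tsum]
    calc t ^ (r + 1) * ∑' n : ↥(Bset r), t ^ zell (n : ℕ)
        ≤ t ^ (r + 1) * (t ^ (r + 1) / (1 - ∑ g ∈ Finset.Icc 2 (2 * r + 1), t ^ g)) :=
          mul_le_mul_of_nonneg_left hSle (pow_nonneg ht0 _)
    _ ≤ 1 - x0 := hCt
  have hre_eq : (∑' n : ↥(Bset r),
      (x ^ (r + 1) * ((-1 : ℂ) ^ (f (n : ℕ)) * x ^ zell (n : ℕ))).re)
      = (∑' n : ↥(Bset r), t ^ (r + 1) * t ^ zell (n : ℕ))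
        - (∑' n : ↥(Bset r), (t ^ (r + 1) * t ^ zell (n : ℕ)
          - (x ^ (r + 1) * ((-1 : ℂ) ^ (f (n : ℕ)) * x ^ zell (n : ℕ))).re)) := by
    rw [htsub]; ring
  have hD0 : 0 ≤ t ^ (r + 1) * t ^ zell (N'' : ℕ)
      - (x ^ (r + 1) * ((-1 : ℂ) ^ (f (N'' : ℕ)) * x ^ zell (N'' : ℕ))).re := by
    have := Complex.re_le_norm (x ^ (r + 1) * ((-1 : ℂ) ^ (f (N'' : ℕ)) * x ^ zell (N'' : ℕ)))
    rw [hznorm N''] at this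
    linarith
  have hxre_eq : x.re = x0 := by linarith
  have ht_eq : t = x0 := by linarith
  have hDzero : t ^ (r + 1) * t ^ zell (N'' : ℕ)
      - (x ^ (r + 1) * ((-1 : ℂ) ^ (f (N'' : ℕ)) * x ^ zell (N'' : ℕ))).re = 0 := by
    linarith
  -- x is the real number x0
  have him : x.im = 0 := by
    have h := Complex.sq_norm x
    rw [Complex.normSq_apply] at h
    have h2 : t ^ 2 = x.re * x.re + x.im * x.im := by rw [htdef]; rw [← h]
    have him2 : x.im * x.im = 0 := by nlinarith
    exact mul_self_eq_zero.mp him2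
  have hxeq : x = ((x0 : ℝ) : ℂ) :=
    Complex.ext (by rw [Complex.ofReal_re]; exact hxre_eq)
      (by rw [Complex.ofReal_im]; exact him)
  -- compute the N'' term explicitly
  have hneg : ((-1 : ℂ)) ^ (f (N'' : ℕ)) = -1 := Odd.neg_one_pow hn''odd
  have hz'' : (x ^ (r + 1) * ((-1 : ℂ) ^ (f (N'' : ℕ)) * x ^ zell (N'' : ℕ)))
      = -(((x0 ^ (r + 1) * x0 ^ zell (N'' : ℕ) : ℝ) : ℂ)) := by
    rw [hneg, hxeq]
    push_cast
    ring
  have hre'' : (x ^ (r + 1) * ((-1 : ℂ) ^ (f (N'' : ℕ)) * x ^ zell (N'' : ℕ))).re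
      = -(x0 ^ (r + 1) * x0 ^ zell (N'' : ℕ)) := by
    rw [hz'', Complex.neg_re, Complex.ofReal_re]
  have hpos : 0 < x0 ^ (r + 1) * x0 ^ zell (N'' : ℕ) :=
    mul_pos (pow_pos hx0pos _) (pow_pos hx0pos _)
  rw [hre'', ht_eq] at hDzero
  linarith

end Claim2


/-- If `f(n) = s_φ(pn) + s_φ(qn)` is `r`-quasi-additive and `𝓑` contains
elements of even and of odd `f`-value, then there is `x₁ > 1/φ` such that
`x + x^{r+1}·B(x,-1) ≠ 1` for all complex `x` with `|x| ≤ x₁`. -/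
theorem no_zero_of_denominator (p q r : ℕ) (hp : 2 ≤ p) (hpq : p < q) (hr : 2 ≤ r)
    (hqa : QuasiAdd r (fun n => sphi (p * n) + sphi (q * n)))
    (heven : ∃ n' ∈ Bset r, Even (sphi (p * n') + sphi (q * n')))
    (hodd : ∃ n'' ∈ Bset r, Odd (sphi (p * n'') + sphi (q * n''))) :
    ∃ x1 : ℝ, 1 / Real.goldenRatio < x1 ∧
      ∀ x : ℂ, ‖x‖ ≤ x1 →
        x + x ^ (r + 1) *
          (∑' n : Bset r,
            (-1 : ℂ) ^ (sphi (p * (n : ℕ)) + sphi (q * (n : ℕ))) * x ^ zell (n : ℕ))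
          ≠ 1 := by
  classical
  obtain ⟨n'', hn''B, hn''odd⟩ := hodd
  -- golden ratio facts
  set x0 : ℝ := 1 / Real.goldenRatio with hx0def
  have hφ : 1 < Real.goldenRatio := Real.one_lt_goldenRatio
  have hx0pos : 0 < x0 := div_pos one_pos (by linarith)
  have hx0lt1 : x0 < 1 := by rw [hx0def, div_lt_one (by linarith)]; exact hφ
  have hx0sq : x0 ^ 2 = 1 - x0 := by
    have hgne : Real.goldenRatio ≠ 0 := Real.goldenRatio_pos.ne'
    rw [hx0def]
    field_simp
    linear_combination (-(1:ℝ)) * (Real.sq_sqrt (by norm_num : (0:ℝ) ≤ 5))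
  -- the σ polynomial
  have hσx0 : (∑ g ∈ Finset.Icc 2 (2 * r + 1), x0 ^ g) = 1 - x0 ^ (2 * r) :=
    sigma_eval hx0sq r
  have hσx0lt : (∑ g ∈ Finset.Icc 2 (2 * r + 1), x0 ^ g) < 1 := by
    rw [hσx0]
    have : 0 < x0 ^ (2 * r) := pow_pos hx0pos _
    linarith
  -- choose t1 > x0
  obtain ⟨t1, ht1x0, ht1lt1, hσt1⟩ :
      ∃ t1 : ℝ, x0 < t1 ∧ t1 < 1 ∧ (∑ g ∈ Finset.Icc 2 (2 * r + 1), t1 ^ g) < 1 := by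
    have hcont : Continuous (fun t : ℝ => ∑ g ∈ Finset.Icc 2 (2 * r + 1), t ^ g) :=
      continuous_finset_sum _ (fun g _ => continuous_pow g)
    have h1 : ∀ᶠ t in nhds x0,
        t ∈ {t : ℝ | (∑ g ∈ Finset.Icc 2 (2 * r + 1), t ^ g) < 1} :=
      (isOpen_lt hcont continuous_const).eventually_mem hσx0lt
    have h2 : ∀ᶠ t in nhds x0, t ∈ Set.Iio (1 : ℝ) :=
      isOpen_Iio.eventually_mem hx0lt1
    have h3 := (h1.and h2).filter_mono (nhdsWithin_le_nhds (s := Set.Ioi x0))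
    have h4 : ∀ᶠ t in nhdsWithin x0 (Set.Ioi x0), t ∈ Set.Ioi x0 :=
      eventually_mem_nhdsWithin
    obtain ⟨t1, ⟨hσ1, hlt1⟩, hgt⟩ := (h3.and h4).exists
    exact ⟨t1, hgt, hlt1, hσ1⟩
  have ht1pos : 0 < t1 := lt_trans hx0pos ht1x0
  -- abbreviations
  set Bf : ℂ → ℂ := fun y => ∑' n : ↥(Bset r),
    (-1 : ℂ) ^ (sphi (p * (n : ℕ)) + sphi (q * (n : ℕ))) * y ^ zell (n : ℕ) with hBfdef
  set Tf : ℂ → ℂ := fun y => y + y ^ (r + 1) * Bf y with hTfdef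
  have hFnorm : ∀ (x : ℂ) (n : ↥(Bset r)),
      ‖(-1 : ℂ) ^ (sphi (p * (n : ℕ)) + sphi (q * (n : ℕ))) * x ^ zell (n : ℕ)‖
        = ‖x‖ ^ zell (n : ℕ) := by
    intro x n
    rw [norm_mul, norm_pow, norm_pow, norm_neg, norm_one, one_pow, one_mul]
  have hσmono : ∀ {a b : ℝ}, 0 ≤ a → a ≤ b →
      (∑ g ∈ Finset.Icc 2 (2 * r + 1), a ^ g) ≤ ∑ g ∈ Finset.Icc 2 (2 * r + 1), b ^ g :=
    fun ha hab => Finset.sum_le_sum (fun g _ => pow_le_pow_left₀ ha hab g)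
  have hFsummable : ∀ x : ℂ, ‖x‖ ≤ t1 → Summable (fun n : ↥(Bset r) =>
      (-1 : ℂ) ^ (sphi (p * (n : ℕ)) + sphi (q * (n : ℕ))) * x ^ zell (n : ℕ)) := by
    intro x hx
    apply Summable.of_norm
    have heq : (fun n : ↥(Bset r) =>
        ‖(-1 : ℂ) ^ (sphi (p * (n : ℕ)) + sphi (q * (n : ℕ))) * x ^ zell (n : ℕ)‖)
        = fun n : ↥(Bset r) => ‖x‖ ^ zell (n : ℕ) := funext (hFnorm x)
    rw [heq]
    exact (bset_tsum_bound hr (norm_nonneg x)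
      (lt_of_le_of_lt (hσmono (norm_nonneg x) hx) hσt1)).1
  -- Claim 2 : no zero in the closed ball of radius x0
  have claim2 : ∀ x : ℂ, ‖x‖ ≤ x0 → Tf x ≠ 1 := by
    intro x hx
    exact claim2_lemma hr (fun n => sphi (p * n) + sphi (q * n)) hn''B hn''odd hx
  -- continuity of Bf on the closed ball of radius t1
  have hu_sum : Summable (fun n : ↥(Bset r) => t1 ^ zell (n : ℕ)) :=
    (bset_tsum_bound hr ht1pos.le hσt1).1
  have hTUO : TendstoUniformlyOn
      (fun (v : Finset ↥(Bset r)) (y : ℂ) => ∑ n ∈ v,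
        (-1 : ℂ) ^ (sphi (p * (n : ℕ)) + sphi (q * (n : ℕ))) * y ^ zell (n : ℕ))
      Bf Filter.atTop (Metric.closedBall 0 t1) := by
    apply tendstoUniformlyOn_tsum hu_sum
    intro n y hy
    rw [Fnorm (fun n => sphi (p * n) + sphi (q * n)) y r n]
    apply pow_le_pow_left₀ (norm_nonneg y)
    exact mem_closedBall_zero_iff.mp hy
  have hBcont : ContinuousOn Bf (Metric.closedBall 0 t1) := by
    apply hTUO.continuousOn
    apply Filter.Eventually.frequently
    apply Filter.Eventually.of_forall
    intro v
    apply Continuous.continuousOn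
    exact continuous_finset_sum _ (fun n _ => continuous_const.mul (continuous_pow _))
  have hTcont : ContinuousOn Tf (Metric.closedBall 0 t1) := by
    apply ContinuousOn.add continuousOn_id
    exact ((continuous_pow (r + 1)).continuousOn.mul hBcont)
  set K := Metric.closedBall (0 : ℂ) x0 with hK
  have hKsub : K ⊆ Metric.closedBall 0 t1 := Metric.closedBall_subset_closedBall ht1x0.le
  have hKc : IsCompact K := isCompact_closedBall _ _
  have hKne : K.Nonempty := ⟨0, Metric.mem_closedBall_self hx0pos.le⟩
  have hncont : ContinuousOn (fun y => ‖Tf y - 1‖) K :=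
    ((hTcont.mono hKsub).sub continuousOn_const).norm
  obtain ⟨y0, hy0K, hy0min⟩ := hKc.exists_isMinOn hKne hncont
  have hy0ne : Tf y0 ≠ 1 := by
    apply claim2
    exact mem_closedBall_zero_iff.mp hy0K
  have hm0 : 0 < ‖Tf y0 - 1‖ := by
    rw [norm_pos_iff]
    exact sub_ne_zero.mpr hy0ne
  have hUC : UniformContinuousOn Tf (Metric.closedBall 0 t1) :=
    (isCompact_closedBall _ _).uniformContinuousOn_of_continuous hTcont
  rw [Metric.uniformContinuousOn_iff] at hUC
  obtain ⟨δ, hδ0, hδ⟩ := hUC _ hm0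
  refine ⟨min t1 (x0 + δ / 2), lt_min ht1x0 (by linarith), ?_⟩
  intro x hxle
  show Tf x ≠ 1
  rcases le_or_gt ‖x‖ x0 with hcase | hcase
  · exact claim2 x hcase
  · have hxt1 : ‖x‖ ≤ t1 := le_trans hxle (min_le_left _ _)
    have hxδ : ‖x‖ ≤ x0 + δ / 2 := le_trans hxle (min_le_right _ _)
    have htxpos : 0 < ‖x‖ := lt_trans hx0pos hcase
    set y : ℂ := ((x0 / ‖x‖ : ℝ) : ℂ) * x with hydef
    have hyabs : ‖y‖ = x0 := by
      rw [hydef, norm_mul, Complex.norm_real, Real.norm_eq_abs, abs_of_nonneg (by positivity)]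
      field_simp
    have hyK : y ∈ K := by
      rw [hK, Metric.mem_closedBall, dist_zero_right, hyabs]
    have hxmem : x ∈ Metric.closedBall (0 : ℂ) t1 := by
      rw [Metric.mem_closedBall, dist_zero_right]; exact hxt1
    have hymem : y ∈ Metric.closedBall (0 : ℂ) t1 := hKsub hyK
    have hxy : x - y = ((1 - x0 / ‖x‖ : ℝ) : ℂ) * x := by
      rw [hydef]; push_cast; ring
    have hdistxy : dist x y < δ := by
      rw [Complex.dist_eq, hxy, norm_mul, Complex.norm_real, Real.norm_eq_abs]
      have h01 : x0 / ‖x‖ ≤ 1 := by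
        rw [div_le_one htxpos]; exact hcase.le
      rw [abs_of_nonneg (by linarith)]
      have hmul : (1 - x0 / ‖x‖) * ‖x‖ = ‖x‖ - x0 := by
        field_simp
      rw [hmul]
      linarith
    have hlt := hδ x hxmem y hymem hdistxy
    intro heq1
    have hTy : ‖Tf y0 - 1‖ ≤ ‖Tf y - 1‖ := hy0min hyK
    have hdTT : dist (Tf x) (Tf y) = ‖Tf y - 1‖ := by
      rw [heq1, dist_eq_norm, norm_sub_rev]
    linarith
end
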